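/- Triangle inequality for the SOS analog of the L_p distortion distance: for finite metric measure spaces 𝕏, 𝕐, ℤ with strictly positive probability weights, every real p ≥ 1, and every positive integer r: Δ_{p,r}(𝕏,ℤ) ≤ Δ_{p,r}(𝕏,𝕐) + Δ_{p,r}(𝕐,ℤ). -/

import Mathlib

open MvPolynomial

/-- The Riesz functional associated to a moment sequence `z`. -/
noncomputable def riesz {σ : Type*} (z : (σ →₀ ℕ) → ℝ) (p : MvPolynomial σ ℝ) : ℝ :=
  ∑ α ∈ p.support, MvPolynomial.coeff α p * z α

/-- The total degree (length) of a multi-index. -/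
def mdeg {σ : Type*} (α : σ →₀ ℕ) : ℕ := α.sum fun _ e => e

/-- Positive semidefiniteness of the truncated localizing matrix `M_t(g z)`:
the associated quadratic form is nonnegative on coefficient vectors of
polynomials of degree at most `t`. -/
def locPSD {σ : Type*} (z : (σ →₀ ℕ) → ℝ) (g : MvPolynomial σ ℝ) (t : ℕ) : Prop :=
  ∀ p : MvPolynomial σ ℝ, p.totalDegree ≤ t → 0 ≤ riesz z (g * p ^ 2)

/-- Vanishing of the truncated localizing matrix `M_t(g z)`: all entries are zero. -/
def locZero {σ : Type*} (z : (σ →₀ ℕ) → ℝ) (g : MvPolynomial σ ℝ) (t : ℕ) : Prop :=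
  ∀ α β : σ →₀ ℕ, mdeg α ≤ t → mdeg β ≤ t →
    riesz z (g * monomial α 1 * monomial β 1) = 0

/-- The row-marginal polynomial `r_i(π) = ∑_j π_{ij} - μ_i`. -/
noncomputable def rowPoly (a b : ℕ) (μ : Fin a → ℝ) (i : Fin a) :
    MvPolynomial (Fin a × Fin b) ℝ :=
  (∑ j, X (i, j)) - C (μ i)

/-- The column-marginal polynomial `c_j(π) = ∑_i π_{ij} - ν_j`. -/
noncomputable def colPoly (a b : ℕ) (ν : Fin b → ℝ) (j : Fin b) :
    MvPolynomial (Fin a × Fin b) ℝ :=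
  (∑ i, X (i, j)) - C (ν j)

/-- The monomial `e_I = ∏_{(i,j) ∈ I} π_{ij}`. -/
noncomputable def eI {a b : ℕ} (I : Finset (Fin a × Fin b)) : MvPolynomial (Fin a × Fin b) ℝ :=
  ∏ q ∈ I, X q

/-- A probability vector: nonnegative entries summing to 1. -/
def IsProbVec {a : ℕ} (μ : Fin a → ℝ) : Prop := (∀ i, 0 ≤ μ i) ∧ ∑ i, μ i = 1

/-- Feasibility for the level-`r` Schmüdgen moment relaxation (S-DGW-r). -/
def SFeas (a b r : ℕ) (μ : Fin a → ℝ) (ν : Fin b → ℝ)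
    (z : ((Fin a × Fin b) →₀ ℕ) → ℝ) : Prop :=
  z 0 = 1 ∧
  (∀ I : Finset (Fin a × Fin b), I.card ≤ 2 * r → locPSD z (eI I) (r - (I.card + 1) / 2)) ∧
  (∀ i, locZero z (rowPoly a b μ i) (r - 1)) ∧
  (∀ j, locZero z (colPoly a b ν j) (r - 1)) ∧
  (∀ i₁ i₂ : Fin a, ∀ j : Fin b, locZero z (rowPoly a b μ i₁ * X (i₂, j)) (r - 1)) ∧
  (∀ j₁ j₂ : Fin b, ∀ i : Fin a, locZero z (colPoly a b ν j₁ * X (i, j₂)) (r - 1))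

/-- The objective of the Schmüdgen moment relaxation. -/
noncomputable def objS (a b : ℕ) (L : Fin a → Fin b → Fin a → Fin b → ℝ)
    (z : ((Fin a × Fin b) →₀ ℕ) → ℝ) : ℝ :=
  ∑ i, ∑ j, ∑ k, ∑ l, L i j k l * z (Finsupp.single (i, j) 1 + Finsupp.single (k, l) 1)

/-- The optimal value of the level-`r` Schmüdgen moment relaxation. -/
noncomputable def valS (a b r : ℕ) (μ : Fin a → ℝ) (ν : Fin b → ℝ)
    (L : Fin a → Fin b → Fin a → Fin b → ℝ) : ℝ :=
  sInf {v : ℝ | ∃ z, SFeas a b r μ ν z ∧ v = objS a b L z}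

/-- The distortion cost tensor `L_{ij,kl} = |d_X(x_i,x_k) − d_Y(y_j,y_l)|^p`. -/
noncomputable def distCost (a b : ℕ) (dX : Fin a → Fin a → ℝ) (dY : Fin b → Fin b → ℝ)
    (p : ℝ) : Fin a → Fin b → Fin a → Fin b → ℝ :=
  fun i j k l => |dX i k - dY j l| ^ p

/-- The SOS analog `Δ_{p,r}` of the `L_p` distortion distance:
the `p`-th root of the value of the level-`r` Schmüdgen moment relaxation with the
distortion cost. -/
noncomputable def deltaPR (a b r : ℕ) (α : Fin a → ℝ) (β : Fin b → ℝ)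
    (dX : Fin a → Fin a → ℝ) (dY : Fin b → Fin b → ℝ) (p : ℝ) : ℝ :=
  valS a b r α β (distCost a b dX dY p) ^ (1 / p)

/-- `d` is a metric on `Fin a`. -/
def IsFinMetric {a : ℕ} (d : Fin a → Fin a → ℝ) : Prop :=
  (∀ i, d i i = 0) ∧ (∀ i k, d i k = d k i) ∧
  (∀ i k l, d i l ≤ d i k + d k l) ∧ (∀ i k, d i k = 0 → i = k)

namespace SOSAux

variable {σ : Type*}

theorem riesz_subset {z : (σ →₀ ℕ) → ℝ} {p : MvPolynomial σ ℝ} {S : Finset (σ →₀ ℕ)}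
    (h : p.support ⊆ S) : riesz z p = ∑ α ∈ S, MvPolynomial.coeff α p * z α := by
  refine Finset.sum_subset h fun x _ hx => ?_
  rw [MvPolynomial.notMem_support_iff.mp hx, zero_mul]

@[simp] theorem riesz_zero (z : (σ →₀ ℕ) → ℝ) : riesz z (0 : MvPolynomial σ ℝ) = 0 := by
  simp [riesz]

theorem riesz_add (z : (σ →₀ ℕ) → ℝ) (p q : MvPolynomial σ ℝ) :
    riesz z (p + q) = riesz z p + riesz z q := by
  classical
  rw [riesz_subset (S := p.support ∪ q.support) (MvPolynomial.support_add),
    riesz_subset (S := p.support ∪ q.support) Finset.subset_union_left,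
    riesz_subset (S := p.support ∪ q.support) Finset.subset_union_right,
    ← Finset.sum_add_distrib]
  exact Finset.sum_congr rfl fun x _ => by rw [coeff_add, add_mul]

theorem riesz_smul (z : (σ →₀ ℕ) → ℝ) (c : ℝ) (p : MvPolynomial σ ℝ) :
    riesz z (c • p) = c * riesz z p := by
  rw [riesz_subset (S := p.support) (MvPolynomial.support_smul), riesz, Finset.mul_sum]
  exact Finset.sum_congr rfl fun x _ => by rw [coeff_smul, smul_eq_mul, mul_assoc]

theorem riesz_monomial (z : (σ →₀ ℕ) → ℝ) (a : σ →₀ ℕ) (c : ℝ) :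
    riesz z (monomial a c) = c * z a := by
  classical
  rcases eq_or_ne c 0 with rfl | hc
  · simp
  · rw [riesz, support_monomial, if_neg hc, Finset.sum_singleton, coeff_monomial, if_pos rfl]

theorem riesz_sum (z : (σ →₀ ℕ) → ℝ) {ι : Type*} (s : Finset ι) (f : ι → MvPolynomial σ ℝ) :
    riesz z (∑ i ∈ s, f i) = ∑ i ∈ s, riesz z (f i) := by
  classical
  induction s using Finset.induction_on with
  | empty => simp
  | insert _ _ h ih => rw [Finset.sum_insert h, riesz_add, ih, Finset.sum_insert h]

theorem riesz_neg (z : (σ →₀ ℕ) → ℝ) (p : MvPolynomial σ ℝ) : riesz z (-p) = - riesz z p := by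
  have : (-p) = (-1 : ℝ) • p := by simp
  rw [this, riesz_smul]; ring

theorem riesz_sub (z : (σ →₀ ℕ) → ℝ) (p q : MvPolynomial σ ℝ) :
    riesz z (p - q) = riesz z p - riesz z q := by
  rw [sub_eq_add_neg, riesz_add, riesz_neg, sub_eq_add_neg]

theorem riesz_C_mul (z : (σ →₀ ℕ) → ℝ) (c : ℝ) (p : MvPolynomial σ ℝ) :
    riesz z (C c * p) = c * riesz z p := by
  rw [← smul_eq_C_mul, riesz_smul]

@[simp] theorem mdeg_zero : mdeg (0 : σ →₀ ℕ) = 0 := by simp [mdeg]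

theorem mdeg_add (a b : σ →₀ ℕ) : mdeg (a + b) = mdeg a + mdeg b :=
  Finsupp.sum_add_index' (fun _ => rfl) (fun _ _ _ => rfl)

@[simp] theorem mdeg_single (x : σ) (e : ℕ) : mdeg (Finsupp.single x e) = e :=
  Finsupp.sum_single_index rfl

theorem mdeg_finsetSum {ι : Type*} (s : Finset ι) (f : ι → (σ →₀ ℕ)) :
    mdeg (∑ i ∈ s, f i) = ∑ i ∈ s, mdeg (f i) := by
  classical
  induction s using Finset.induction_on with
  | empty => simp
  | insert _ _ h ih => rw [Finset.sum_insert h, mdeg_add, ih, Finset.sum_insert h]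

theorem le_totalDegree' {R : Type*} [CommSemiring R] {p : MvPolynomial σ R} {a : σ →₀ ℕ}
    (h : a ∈ p.support) : mdeg a ≤ p.totalDegree := MvPolynomial.le_totalDegree h

theorem totalDegree_monomial_le {R : Type*} [CommSemiring R] (a : σ →₀ ℕ) (c : R) :
    (monomial a c).totalDegree ≤ mdeg a := by
  rcases eq_or_ne c 0 with rfl | hc
  · simp
  · rw [MvPolynomial.totalDegree_monomial _ hc]; exact le_rfl

-- splitting a multi-index
theorem exists_le_mdeg (η : σ →₀ ℕ) (k : ℕ) (hk : k ≤ mdeg η) :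
    ∃ η₁ : σ →₀ ℕ, η₁ ≤ η ∧ mdeg η₁ = k := by
  classical
  induction k with
  | zero => exact ⟨0, zero_le, mdeg_zero⟩
  | succ k ih =>
    obtain ⟨η₁, hle, hdeg⟩ := ih (le_of_lt (Nat.lt_of_succ_le hk))
    have hne : η₁ ≠ η := by
      rintro rfl; omega
    have : ∃ x, η₁ x < η x := by
      by_contra hcon
      push_neg at hcon
      exact hne (le_antisymm hle fun x => hcon x)
    obtain ⟨x, hx⟩ := this
    refine ⟨η₁ + Finsupp.single x 1, ?_, by rw [mdeg_add, hdeg, mdeg_single]⟩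
    rw [Finsupp.le_def]
    intro y
    rw [Finsupp.add_apply, Finsupp.single_apply]
    rcases eq_or_ne x y with rfl | hxy
    · rw [if_pos rfl]; omega
    · rw [if_neg hxy]
      have := Finsupp.le_def.mp hle y
      omega


/-- product of variables as a monomial -/
theorem prod_X_eq_monomial {R : Type*} [CommSemiring R] {ι : Type*} (s : Finset ι) (v : ι → σ) :
    (∏ x ∈ s, (X (v x) : MvPolynomial σ R)) = monomial (∑ x ∈ s, Finsupp.single (v x) 1) 1 := by
  classical
  induction s using Finset.induction_on with
  | empty => simp [monomial_zero']
  | insert _ _ h ih =>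
    rw [Finset.prod_insert h, ih, Finset.sum_insert h, X, monomial_mul, one_mul]

theorem locZero_mono_kill {z : (σ →₀ ℕ) → ℝ} {g : MvPolynomial σ ℝ} {t : ℕ}
    (h : locZero z g t) (η : σ →₀ ℕ) (hη : mdeg η ≤ 2 * t) :
    riesz z (g * monomial η 1) = 0 := by
  obtain ⟨η₁, hle, hdeg⟩ := exists_le_mdeg η (min (mdeg η) t) (min_le_left _ _)
  have hsum : η₁ + (η - η₁) = η := add_tsub_cancel_of_le hle
  have hmd : mdeg η = mdeg η₁ + mdeg (η - η₁) := by rw [← mdeg_add, hsum]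
  have h1 : mdeg η₁ ≤ t := by omega
  have h2 : mdeg (η - η₁) ≤ t := by omega
  have := h η₁ (η - η₁) h1 h2
  rwa [mul_assoc, monomial_mul, one_mul, hsum] at this

/-- kill a polynomial factor -/
theorem locZero_kill {z : (σ →₀ ℕ) → ℝ} {g : MvPolynomial σ ℝ} {t : ℕ}
    (h : locZero z g t) (f : MvPolynomial σ ℝ) (hf : f.totalDegree ≤ 2 * t) :
    riesz z (g * f) = 0 := by
  conv_lhs => rw [as_sum f]
  rw [Finset.mul_sum, riesz_sum]
  refine Finset.sum_eq_zero fun a ha => ?_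
  have h2 : g * monomial a (coeff a f) = C (coeff a f) * (g * monomial a 1) := by
    rw [show C (coeff a f) * (g * monomial a 1) = g * (C (coeff a f) * monomial a 1) by ring,
      C_mul_monomial, mul_one]
  rw [h2, riesz_C_mul, locZero_mono_kill h a (le_trans (le_totalDegree' ha) hf), mul_zero]

/-- abstract monomial-PSD property at level r -/
def MonPSD (z : (σ →₀ ℕ) → ℝ) (r : ℕ) : Prop :=
  ∀ (η : σ →₀ ℕ) (f : MvPolynomial σ ℝ), mdeg η + 2 * f.totalDegree ≤ 2 * r →
    0 ≤ riesz z (monomial η 1 * (f * f))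

theorem monPSD_of_schmudgen {a b r : ℕ} (z : ((Fin a × Fin b) →₀ ℕ) → ℝ)
    (hs : ∀ I : Finset (Fin a × Fin b), I.card ≤ 2 * r →
      locPSD z (eI I) (r - (I.card + 1) / 2)) : MonPSD z r := by
  classical
  intro η f hdeg
  set K : Finset (Fin a × Fin b) := η.support.filter (fun x => Odd (η x)) with hK
  set ρ : (Fin a × Fin b) →₀ ℕ := Finsupp.mapRange (fun e => e / 2) (by simp) η with hρ
  set ε : (Fin a × Fin b) →₀ ℕ := ∑ x ∈ K, Finsupp.single x 1 with hε
  have hεapp : ∀ y, ε y = if y ∈ K then 1 else 0 := by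
    intro y
    rw [hε, Finsupp.finset_sum_apply]
    rcases Finset.decidableMem y K with hy | hy
    · rw [if_neg hy]
      exact Finset.sum_eq_zero fun x hx => by
        rw [Finsupp.single_apply, if_neg]; rintro rfl; exact hy hx
    · rw [if_pos hy, Finset.sum_eq_single y
        (fun x hx hxy => by rw [Finsupp.single_apply, if_neg hxy])
        (fun hy' => absurd hy hy')]
      rw [Finsupp.single_apply, if_pos rfl]
  have hηsplit : η = ρ + ρ + ε := by
    ext y
    rw [Finsupp.add_apply, Finsupp.add_apply, hεapp y]
    have hρy : ρ y = η y / 2 := by rw [hρ, Finsupp.mapRange_apply]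
    rw [hρy]
    by_cases hy : y ∈ K
    · rw [if_pos hy]
      have hodd : Odd (η y) := (Finset.mem_filter.mp hy).2
      rw [Nat.odd_iff] at hodd
      omega
    · rw [if_neg hy]
      have hnodd : ¬ Odd (η y) := by
        intro hodd
        refine hy (Finset.mem_filter.mpr ⟨?_, hodd⟩)
        rw [Finsupp.mem_support_iff]
        rintro h0; rw [h0] at hodd; simp at hodd
      rw [Nat.odd_iff] at hnodd
      omega
  have hmdegε : mdeg ε = K.card := by
    rw [hε, mdeg_finsetSum]
    simp
  have hmdegη : mdeg η = 2 * mdeg ρ + K.card := by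
    rw [hηsplit, mdeg_add, mdeg_add, hmdegε]; ring
  have hKcard : K.card ≤ 2 * r := by omega
  have heI : eI K = monomial ε 1 := by
    rw [eI, hε]
    have := prod_X_eq_monomial (R := ℝ) (σ := Fin a × Fin b) K id
    simpa using this
  have key : monomial η (1:ℝ) * (f * f) = eI K * (monomial ρ 1 * f) ^ 2 := by
    rw [heI, pow_two,
      show monomial ε (1:ℝ) * (monomial ρ 1 * f * (monomial ρ 1 * f))
        = (monomial ε 1 * monomial ρ 1 * monomial ρ 1) * (f * f) by ring,
      monomial_mul, monomial_mul]
    congr 2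
    · rw [hηsplit]; abel
    · norm_num
  rw [key]
  refine hs K hKcard _ ?_
  calc (monomial ρ 1 * f).totalDegree ≤ (monomial ρ (1:ℝ)).totalDegree + f.totalDegree :=
        totalDegree_mul _ _
    _ ≤ mdeg ρ + f.totalDegree := by
        have := totalDegree_monomial_le ρ (1:ℝ); omega
    _ ≤ r - (K.card + 1) / 2 := by omega

theorem riesz_bilin (z : (σ →₀ ℕ) → ℝ) (M : MvPolynomial σ ℝ) {ι : Type*} (u : Finset ι)
    (v : ι → ℝ) (P : ι → MvPolynomial σ ℝ) :
    riesz z (M * ((∑ a ∈ u, v a • P a) * (∑ b ∈ u, v b • P b)))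
      = ∑ a ∈ u, ∑ b ∈ u, v a * v b * riesz z (M * (P a * P b)) := by
  rw [Finset.sum_mul_sum]
  rw [Finset.mul_sum, riesz_sum]
  refine Finset.sum_congr rfl fun a _ => ?_
  rw [Finset.mul_sum, riesz_sum]
  refine Finset.sum_congr rfl fun b _ => ?_
  rw [show M * (v a • P a * (v b • P b)) = (v a * v b) • (M * (P a * P b)) by
    rw [smul_mul_smul_comm, mul_smul_comm], riesz_smul]

section Tfun
variable {σ₁ σ₂ : Type*} (z₁ : (σ₁ →₀ ℕ) → ℝ) (z₂ : (σ₂ →₀ ℕ) → ℝ)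

noncomputable def T (F : MvPolynomial σ₁ (MvPolynomial σ₂ ℝ)) : ℝ :=
  ∑ a ∈ F.support, z₁ a * riesz z₂ (F.coeff a)

theorem T_subset {F : MvPolynomial σ₁ (MvPolynomial σ₂ ℝ)} {S : Finset (σ₁ →₀ ℕ)}
    (h : F.support ⊆ S) : T z₁ z₂ F = ∑ a ∈ S, z₁ a * riesz z₂ (F.coeff a) := by
  refine Finset.sum_subset h fun x _ hx => ?_
  rw [MvPolynomial.notMem_support_iff.mp hx, riesz_zero, mul_zero]

theorem T_add (F G : MvPolynomial σ₁ (MvPolynomial σ₂ ℝ)) :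
    T z₁ z₂ (F + G) = T z₁ z₂ F + T z₁ z₂ G := by
  classical
  rw [T_subset z₁ z₂ (S := F.support ∪ G.support) (MvPolynomial.support_add),
    T_subset z₁ z₂ (S := F.support ∪ G.support) Finset.subset_union_left,
    T_subset z₁ z₂ (S := F.support ∪ G.support) Finset.subset_union_right,
    ← Finset.sum_add_distrib]
  refine Finset.sum_congr rfl fun x _ => by rw [coeff_add, riesz_add, mul_add]

theorem T_smul (c : ℝ) (F : MvPolynomial σ₁ (MvPolynomial σ₂ ℝ)) :
    T z₁ z₂ (c • F) = c * T z₁ z₂ F := by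
  rw [T_subset z₁ z₂ (S := F.support) (MvPolynomial.support_smul), T, Finset.mul_sum]
  refine Finset.sum_congr rfl fun x _ => ?_
  rw [coeff_smul, riesz_smul]; ring

theorem T_monomial (a : σ₁ →₀ ℕ) (g : MvPolynomial σ₂ ℝ) :
    T z₁ z₂ (monomial a g) = z₁ a * riesz z₂ g := by
  classical
  rcases eq_or_ne g 0 with rfl | hg
  · simp [T]
  · rw [T, support_monomial, if_neg hg, Finset.sum_singleton, coeff_monomial, if_pos rfl]

theorem T_sum {ι : Type*} (s : Finset ι) (f : ι → MvPolynomial σ₁ (MvPolynomial σ₂ ℝ)) :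
    T z₁ z₂ (∑ i ∈ s, f i) = ∑ i ∈ s, T z₁ z₂ (f i) := by
  classical
  induction s using Finset.induction_on with
  | empty => simp [T]
  | insert _ _ h ih => rw [Finset.sum_insert h, T_add, ih, Finset.sum_insert h]

theorem T_monomial_mul (η : σ₁ →₀ ℕ) (c : MvPolynomial σ₂ ℝ)
    (F : MvPolynomial σ₁ (MvPolynomial σ₂ ℝ)) :
    T z₁ z₂ (monomial η c * F)
      = ∑ a ∈ F.support, z₁ (η + a) * riesz z₂ (c * F.coeff a) := by
  conv_lhs => rw [as_sum F]
  rw [Finset.mul_sum, T_sum]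
  refine Finset.sum_congr rfl fun a _ => ?_
  rw [monomial_mul, T_monomial]

theorem T_monomial_mul_mul (η : σ₁ →₀ ℕ) (c : MvPolynomial σ₂ ℝ)
    (F G : MvPolynomial σ₁ (MvPolynomial σ₂ ℝ)) :
    T z₁ z₂ (monomial η c * (F * G))
      = ∑ a ∈ F.support, ∑ b ∈ G.support,
          z₁ (η + a + b) * riesz z₂ (c * (F.coeff a * G.coeff b)) := by
  have hFG : F * G = ∑ a ∈ F.support, ∑ b ∈ G.support,
      monomial (a + b) (F.coeff a * G.coeff b) := by
    conv_lhs => rw [as_sum F, as_sum G]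
    rw [Finset.sum_mul_sum]
    exact Finset.sum_congr rfl fun a _ => Finset.sum_congr rfl fun b _ => monomial_mul
  rw [hFG, Finset.mul_sum, T_sum]
  refine Finset.sum_congr rfl fun a _ => ?_
  rw [Finset.mul_sum, T_sum]
  refine Finset.sum_congr rfl fun b _ => ?_
  rw [monomial_mul, T_monomial, add_assoc]

theorem riesz_mul_monomial (z : (σ →₀ ℕ) → ℝ) (G : MvPolynomial σ ℝ) (a : σ →₀ ℕ) :
    riesz z (G * monomial a 1) = ∑ b ∈ G.support, coeff b G * z (b + a) := by
  conv_lhs => rw [as_sum G]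
  rw [Finset.sum_mul, riesz_sum]
  refine Finset.sum_congr rfl fun b _ => ?_
  rw [monomial_mul, mul_one, riesz_monomial]

/-- embedding of σ₁-polynomials into the iterated ring -/
noncomputable def iota : MvPolynomial σ₁ ℝ →+* MvPolynomial σ₁ (MvPolynomial σ₂ ℝ) :=
  MvPolynomial.map (C : ℝ →+* MvPolynomial σ₂ ℝ)

theorem iota_X (v : σ₁) : (iota (X v) : MvPolynomial σ₁ (MvPolynomial σ₂ ℝ)) = X v :=
  map_X _ _

theorem iota_mul (g h : MvPolynomial σ₁ ℝ) :
    (iota (g * h) : MvPolynomial σ₁ (MvPolynomial σ₂ ℝ)) = iota g * iota h :=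
  map_mul _ _ _

theorem T_iota_mul (G : MvPolynomial σ₁ ℝ) (F : MvPolynomial σ₁ (MvPolynomial σ₂ ℝ)) :
    T z₁ z₂ (iota G * F)
      = ∑ a ∈ F.support, riesz z₂ (F.coeff a) * riesz z₁ (G * monomial a 1) := by
  have hiG : iota (σ₂ := σ₂) G = ∑ b ∈ G.support, monomial b (C (coeff b G)) := by
    conv_lhs => rw [as_sum G]
    rw [map_sum]
    exact Finset.sum_congr rfl fun b _ => map_monomial _ _ _
  rw [hiG, Finset.sum_mul, T_sum]
  have : ∀ b ∈ G.support, T z₁ z₂ (monomial b (C (coeff b G)) * F)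
      = ∑ a ∈ F.support, coeff b G * (z₁ (b + a) * riesz z₂ (F.coeff a)) := by
    intro b _
    rw [T_monomial_mul]
    exact Finset.sum_congr rfl fun a _ => by rw [riesz_C_mul]; ring
  rw [Finset.sum_congr rfl this, Finset.sum_comm]
  refine Finset.sum_congr rfl fun a _ => ?_
  rw [riesz_mul_monomial, Finset.mul_sum]
  exact Finset.sum_congr rfl fun b _ => by ring

theorem T_C_kill {D : ℕ} {G : MvPolynomial σ₂ ℝ}
    (hG : ∀ f : MvPolynomial σ₂ ℝ, f.totalDegree ≤ D → riesz z₂ (G * f) = 0)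
    (F : MvPolynomial σ₁ (MvPolynomial σ₂ ℝ))
    (hF : ∀ a, (F.coeff a).totalDegree ≤ D) :
    T z₁ z₂ (C G * F) = 0 := by
  have : (C G : MvPolynomial σ₁ (MvPolynomial σ₂ ℝ)) = monomial 0 G := by
    rw [monomial_zero']
  rw [this, T_monomial_mul]
  exact Finset.sum_eq_zero fun a _ => by rw [hG _ (hF a), mul_zero]

theorem T_iota_kill {D : ℕ} {G : MvPolynomial σ₁ ℝ}
    (hG : ∀ η : σ₁ →₀ ℕ, mdeg η ≤ D → riesz z₁ (G * monomial η 1) = 0)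
    (F : MvPolynomial σ₁ (MvPolynomial σ₂ ℝ)) (hF : F.totalDegree ≤ D) :
    T z₁ z₂ (iota G * F) = 0 := by
  rw [T_iota_mul]
  exact Finset.sum_eq_zero fun a ha => by
    rw [hG a (le_trans (le_totalDegree' ha) hF), mul_zero]

/-- The core PSD lemma for the tensor functional. -/
theorem T_PSD {r : ℕ} (hm₁ : MonPSD z₁ r) (hm₂ : MonPSD z₂ r)
    (η₁ : σ₁ →₀ ℕ) (η₂ : σ₂ →₀ ℕ) (F : MvPolynomial σ₁ (MvPolynomial σ₂ ℝ))
    (d₁ d₂ : ℕ) (hFo : F.totalDegree ≤ d₁) (hFi : ∀ a, (F.coeff a).totalDegree ≤ d₂)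
    (h1 : mdeg η₁ + 2 * d₁ ≤ 2 * r) (h2 : mdeg η₂ + 2 * d₂ ≤ 2 * r) :
    0 ≤ T z₁ z₂ (monomial η₁ (monomial η₂ 1) * (F * F)) := by
  classical
  rw [T_monomial_mul_mul]
  set s := F.support with hs
  -- rewrite as a sum over the subtype
  rw [← Finset.sum_attach s (fun a => ∑ b ∈ s, z₁ (η₁ + a + b) *
      riesz z₂ (monomial η₂ 1 * (F.coeff a * F.coeff b)))]
  have hrw : ∀ a : {x // x ∈ s}, (∑ b ∈ s, z₁ (η₁ + ↑a + b) *
      riesz z₂ (monomial η₂ 1 * (F.coeff ↑a * F.coeff b)))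
      = ∑ b ∈ s.attach, z₁ (η₁ + ↑a + ↑b) *
        riesz z₂ (monomial η₂ 1 * (F.coeff ↑a * F.coeff ↑b)) := by
    intro a
    rw [Finset.sum_attach s (fun b => z₁ (η₁ + ↑a + b) *
      riesz z₂ (monomial η₂ 1 * (F.coeff ↑a * F.coeff b)))]
  rw [Finset.sum_congr rfl (fun a _ => hrw a)]
  -- the Gram matrix on the left factor
  set A : Matrix {x // x ∈ s} {x // x ∈ s} ℝ :=
    Matrix.of (fun a b : {x // x ∈ s} => z₁ (η₁ + ↑a + ↑b)) with hA
  have quadform : ∀ x : {x // x ∈ s} → ℝ,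
      ∑ a ∈ s.attach, ∑ b ∈ s.attach, x a * x b * z₁ (η₁ + ↑a + ↑b)
        = riesz z₁ (monomial η₁ 1 *
          ((∑ a ∈ s.attach, x a • monomial (↑a : σ₁ →₀ ℕ) 1) *
           (∑ b ∈ s.attach, x b • monomial (↑b : σ₁ →₀ ℕ) 1))) := by
    intro x
    rw [riesz_bilin]
    refine Finset.sum_congr rfl fun a _ => Finset.sum_congr rfl fun b _ => ?_
    rw [monomial_mul, one_mul, monomial_mul, one_mul, riesz_monomial, one_mul, add_assoc]
  have hdegsum : ∀ x : {x // x ∈ s} → ℝ,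
      (∑ a ∈ s.attach, x a • monomial (↑a : σ₁ →₀ ℕ) (1:ℝ)).totalDegree ≤ d₁ := by
    intro x
    refine le_trans (totalDegree_finset_sum _ _) (Finset.sup_le fun a _ => ?_)
    refine le_trans (totalDegree_smul_le _ _) (le_trans (totalDegree_monomial_le _ _) ?_)
    exact le_trans (le_totalDegree' a.2) hFo
  have hApsd : A.PosSemidef := by
    rw [Matrix.posSemidef_iff_dotProduct_mulVec]
    constructor
    · ext a b
      simp only [Matrix.conjTranspose_apply, hA, Matrix.of_apply, star_trivial]
      rw [add_right_comm]
    · intro x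
      have hsx : star x = x := by funext a; exact star_trivial _
      rw [hsx]
      have hexp : dotProduct x (A.mulVec x)
          = ∑ a ∈ s.attach, ∑ b ∈ s.attach, x a * x b * z₁ (η₁ + ↑a + ↑b) := by
        simp only [dotProduct, Matrix.mulVec, hA, Matrix.of_apply,
          ← Finset.univ_eq_attach, Finset.mul_sum]
        exact Finset.sum_congr rfl fun a _ => Finset.sum_congr rfl fun b _ => by ring
      rw [hexp, quadform x]
      exact hm₁ η₁ _ (by have := hdegsum x; omega)
  obtain ⟨Bm, hBm⟩ : ∃ B : Matrix {x // x ∈ s} {x // x ∈ s} ℝ, A = B.conjTranspose * B := by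
    classical
    open scoped MatrixOrder in
    obtain ⟨X, hX, -, hXA⟩ :=
      CFC.exists_sqrt_of_isSelfAdjoint_of_quasispectrumRestricts hApsd.isHermitian
        (QuasispectrumRestricts.nnreal_of_nonneg hApsd.nonneg)
    exact ⟨X, by rw [← Matrix.star_eq_conjTranspose, hX.star_eq, hXA]; rfl⟩
  have hentry : ∀ a b : {x // x ∈ s}, z₁ (η₁ + ↑a + ↑b) = ∑ k ∈ s.attach, Bm k a * Bm k b := by
    intro a b
    have h0 : A a b = (Bm.conjTranspose * Bm) a b := by rw [← hBm]
    rw [show A a b = z₁ (η₁ + ↑a + ↑b) from rfl] at h0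
    rw [h0, Matrix.mul_apply, ← Finset.univ_eq_attach]
    exact Finset.sum_congr rfl fun k _ => by rw [Matrix.conjTranspose_apply, star_trivial]
  have step : ∑ a ∈ s.attach, ∑ b ∈ s.attach, z₁ (η₁ + ↑a + ↑b) *
        riesz z₂ (monomial η₂ 1 * (F.coeff ↑a * F.coeff ↑b))
      = ∑ k ∈ s.attach, riesz z₂ (monomial η₂ 1 *
          ((∑ a ∈ s.attach, Bm k a • F.coeff ↑a) * (∑ b ∈ s.attach, Bm k b • F.coeff ↑b))) := by
    have e1 : ∀ a b : {x // x ∈ s}, z₁ (η₁ + ↑a + ↑b) *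
        riesz z₂ (monomial η₂ 1 * (F.coeff ↑a * F.coeff ↑b))
        = ∑ k ∈ s.attach, Bm k a * Bm k b *
            riesz z₂ (monomial η₂ 1 * (F.coeff ↑a * F.coeff ↑b)) := by
      intro a b
      rw [hentry a b, Finset.sum_mul]
    calc ∑ a ∈ s.attach, ∑ b ∈ s.attach, z₁ (η₁ + ↑a + ↑b) *
          riesz z₂ (monomial η₂ 1 * (F.coeff ↑a * F.coeff ↑b))
        = ∑ a ∈ s.attach, ∑ b ∈ s.attach, ∑ k ∈ s.attach, Bm k a * Bm k b *
            riesz z₂ (monomial η₂ 1 * (F.coeff ↑a * F.coeff ↑b)) := by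
          exact Finset.sum_congr rfl fun a _ => Finset.sum_congr rfl fun b _ => e1 a b
      _ = ∑ k ∈ s.attach, ∑ a ∈ s.attach, ∑ b ∈ s.attach, Bm k a * Bm k b *
            riesz z₂ (monomial η₂ 1 * (F.coeff ↑a * F.coeff ↑b)) := by
          rw [show ∀ (f : {x // x ∈ s} → {x // x ∈ s} → {x // x ∈ s} → ℝ),
              ∑ a ∈ s.attach, ∑ b ∈ s.attach, ∑ k ∈ s.attach, f a b k
              = ∑ k ∈ s.attach, ∑ a ∈ s.attach, ∑ b ∈ s.attach, f a b k from fun f =>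
            (Finset.sum_congr rfl fun a _ => Finset.sum_comm).trans Finset.sum_comm]
      _ = ∑ k ∈ s.attach, riesz z₂ (monomial η₂ 1 *
          ((∑ a ∈ s.attach, Bm k a • F.coeff ↑a) * (∑ b ∈ s.attach, Bm k b • F.coeff ↑b))) := by
          exact Finset.sum_congr rfl fun k _ => (riesz_bilin z₂ _ _ _ _).symm
  rw [step]
  refine Finset.sum_nonneg fun k _ => ?_
  refine hm₂ η₂ _ ?_
  have hdeg2 : (∑ a ∈ s.attach, Bm k a • F.coeff (↑a : σ₁ →₀ ℕ)).totalDegree ≤ d₂ := by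
    refine le_trans (totalDegree_finset_sum _ _) (Finset.sup_le fun a _ => ?_)
    exact le_trans (totalDegree_smul_le _ _) (hFi _)
  omega

end Tfun

section BddSec
variable {σ₁ σ₂ : Type*}

/-- two-level degree bound -/
def Bdd (d₁ d₂ : ℕ) (F : MvPolynomial σ₁ (MvPolynomial σ₂ ℝ)) : Prop :=
  F.totalDegree ≤ d₁ ∧ ∀ a, (F.coeff a).totalDegree ≤ d₂

theorem Bdd.mono {d₁ d₂ e₁ e₂ : ℕ} {F : MvPolynomial σ₁ (MvPolynomial σ₂ ℝ)}
    (h : Bdd d₁ d₂ F) (h1 : d₁ ≤ e₁) (h2 : d₂ ≤ e₂) : Bdd e₁ e₂ F :=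
  ⟨le_trans h.1 h1, fun a => le_trans (h.2 a) h2⟩

theorem Bdd_one : Bdd 0 0 (1 : MvPolynomial σ₁ (MvPolynomial σ₂ ℝ)) := by
  classical
  refine ⟨le_of_eq totalDegree_one, fun a => ?_⟩
  rw [coeff_one]
  split <;> simp

theorem Bdd_mul {d₁ d₂ e₁ e₂ : ℕ} {F G : MvPolynomial σ₁ (MvPolynomial σ₂ ℝ)}
    (hF : Bdd d₁ d₂ F) (hG : Bdd e₁ e₂ G) : Bdd (d₁ + e₁) (d₂ + e₂) (F * G) := by
  classical
  refine ⟨le_trans (totalDegree_mul _ _) (add_le_add hF.1 hG.1), fun a => ?_⟩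
  rw [coeff_mul]
  refine le_trans (totalDegree_finset_sum _ _) (Finset.sup_le fun x _ => ?_)
  exact le_trans (totalDegree_mul _ _) (add_le_add (hF.2 _) (hG.2 _))

theorem Bdd_sum {ι : Type*} {d₁ d₂ : ℕ} {s : Finset ι}
    {f : ι → MvPolynomial σ₁ (MvPolynomial σ₂ ℝ)}
    (h : ∀ i ∈ s, Bdd d₁ d₂ (f i)) : Bdd d₁ d₂ (∑ i ∈ s, f i) := by
  refine ⟨le_trans (totalDegree_finset_sum _ _) (Finset.sup_le fun i hi => (h i hi).1),
    fun a => ?_⟩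
  rw [coeff_sum]
  exact le_trans (totalDegree_finset_sum _ _) (Finset.sup_le fun i hi => (h i hi).2 a)

theorem Bdd_pow {a b : ℕ} {g : MvPolynomial σ₁ (MvPolynomial σ₂ ℝ)} (h : Bdd a b g) :
    ∀ e : ℕ, Bdd (e * a) (e * b) (g ^ e) := by
  intro e
  induction e with
  | zero => simpa using Bdd_one
  | succ e ih =>
    rw [pow_succ, Nat.succ_mul, Nat.succ_mul]
    exact Bdd_mul ih h

theorem Bdd_finprod {ι : Type*} (s : Finset ι) (d₁ d₂ : ι → ℕ)
    (f : ι → MvPolynomial σ₁ (MvPolynomial σ₂ ℝ))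
    (h : ∀ x ∈ s, Bdd (d₁ x) (d₂ x) (f x)) :
    Bdd (∑ x ∈ s, d₁ x) (∑ x ∈ s, d₂ x) (∏ x ∈ s, f x) := by
  classical
  induction s using Finset.induction_on with
  | empty => simpa using Bdd_one
  | @insert i s hi ih =>
    rw [Finset.prod_insert hi, Finset.sum_insert hi, Finset.sum_insert hi]
    exact Bdd_mul (h i (Finset.mem_insert_self i s))
      (ih fun x hx => h x (Finset.mem_insert_of_mem hx))

theorem Bdd_C (g : MvPolynomial σ₂ ℝ) :
    Bdd 0 g.totalDegree (C g : MvPolynomial σ₁ (MvPolynomial σ₂ ℝ)) := by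
  classical
  refine ⟨le_of_eq (totalDegree_C g), fun a => ?_⟩
  rw [← monomial_zero', coeff_monomial]
  split <;> simp

theorem Bdd_X (v : σ₁) : Bdd 1 0 (X v : MvPolynomial σ₁ (MvPolynomial σ₂ ℝ)) := by
  classical
  refine ⟨le_of_eq (totalDegree_X v), fun a => ?_⟩
  rw [X, coeff_monomial]
  split <;> simp

end BddSec

section Glue
variable {m n q : ℕ}

/-- image of the variable `π_{ik}` under the composition substitution -/
noncomputable def gen (β : Fin n → ℝ) (i : Fin m) (k : Fin q) :
    MvPolynomial (Fin m × Fin n) (MvPolynomial (Fin n × Fin q) ℝ) :=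
  ∑ j, C (C (β j)⁻¹ * X (j, k)) * X (i, j)

/-- the composition substitution -/
noncomputable def Phi (β : Fin n → ℝ) :
    MvPolynomial (Fin m × Fin q) ℝ →ₐ[ℝ]
      MvPolynomial (Fin m × Fin n) (MvPolynomial (Fin n × Fin q) ℝ) :=
  aeval fun ik => gen β ik.1 ik.2

theorem Bdd_gen (β : Fin n → ℝ) (i : Fin m) (k : Fin q) : Bdd 1 1 (gen β i k) := by
  refine Bdd_sum fun j _ => ?_
  have h1 : (C (β j)⁻¹ * X (j, k) : MvPolynomial (Fin n × Fin q) ℝ).totalDegree ≤ 1 := by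
    refine le_trans (totalDegree_mul _ _) ?_
    rw [totalDegree_C]
    simpa using le_of_eq (totalDegree_X (R := ℝ) (σ := Fin n × Fin q) (j, k))
  have := Bdd_mul (Bdd.mono (Bdd_C (σ₁ := Fin m × Fin n) (C (β j)⁻¹ * X (j, k)))
    (le_refl 0) h1) (Bdd_X (i, j))
  simpa using this

theorem algebraMap_MP2 (c : ℝ) :
    (algebraMap ℝ (MvPolynomial (Fin m × Fin n) (MvPolynomial (Fin n × Fin q) ℝ)) c)
      = C (C c) := by
  rw [IsScalarTower.algebraMap_apply ℝ (MvPolynomial (Fin n × Fin q) ℝ)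
    (MvPolynomial (Fin m × Fin n) (MvPolynomial (Fin n × Fin q) ℝ))]
  rw [MvPolynomial.algebraMap_eq, MvPolynomial.algebraMap_eq]

theorem Bdd_Phi (β : Fin n → ℝ) (P : MvPolynomial (Fin m × Fin q) ℝ) :
    Bdd P.totalDegree P.totalDegree (Phi β P) := by
  classical
  have hrep : Phi β P = ∑ η ∈ P.support, Phi β (monomial η (coeff η P)) := by
    conv_lhs => rw [as_sum P]
    rw [map_sum]
  rw [hrep]
  refine Bdd_sum fun η hη => ?_
  rw [Phi, aeval_monomial]
  have hprod : Bdd (mdeg η) (mdeg η)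
      (η.prod fun v e => gen β v.1 v.2 ^ e) := by
    rw [Finsupp.prod]
    have := Bdd_finprod η.support (fun v => η v * 1) (fun v => η v * 1)
      (fun v => gen β v.1 v.2 ^ η v) (fun v _ => Bdd_pow (Bdd_gen β v.1 v.2) (η v))
    simp only [mul_one] at this
    exact this
  have hc : Bdd 0 0 (algebraMap ℝ
      (MvPolynomial (Fin m × Fin n) (MvPolynomial (Fin n × Fin q) ℝ)) (coeff η P)) := by
    rw [algebraMap_MP2]
    exact Bdd.mono (Bdd_C _) le_rfl (le_of_eq (totalDegree_C _))
  have := Bdd_mul hc hprod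
  simp only [Nat.zero_add] at this
  exact Bdd.mono this (le_totalDegree' hη) (le_totalDegree' hη)

variable (β : Fin n → ℝ) (z₁ : ((Fin m × Fin n) →₀ ℕ) → ℝ) (z₂ : ((Fin n × Fin q) →₀ ℕ) → ℝ)

/-- the glued moment sequence -/
noncomputable def zg (η : (Fin m × Fin q) →₀ ℕ) : ℝ :=
  T z₁ z₂ (Phi β (monomial η 1))

theorem riesz_zg (F : MvPolynomial (Fin m × Fin q) ℝ) :
    riesz (zg β z₁ z₂) F = T z₁ z₂ (Phi β F) := by
  induction F using MvPolynomial.induction_on' with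
  | monomial u a =>
    have h1 : (monomial u a : MvPolynomial (Fin m × Fin q) ℝ) = a • monomial u 1 := by
      rw [smul_monomial, smul_eq_mul, mul_one]
    rw [riesz_monomial, h1, map_smul, T_smul, zg]
  | add p q hp hq => rw [riesz_add, map_add, T_add, hp, hq]

end Glue

section GlueDecomp
variable {m n q : ℕ}

theorem Phi_X (β : Fin n → ℝ) (i : Fin m) (k : Fin q) :
    Phi β (X (i, k)) = gen β i k := by
  rw [Phi, aeval_X]

theorem Phi_C (β : Fin n → ℝ) (c : ℝ) :
    Phi (m := m) (q := q) β (C c) = C (C c) := by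
  rw [Phi, aeval_C, algebraMap_MP2]

theorem iota_row (α : Fin m → ℝ) (i : Fin m) :
    (iota (σ₂ := Fin n × Fin q) (rowPoly m n α i))
      = (∑ j, X (i, j)) - C (C (α i)) := by
  rw [rowPoly, map_sub, map_sum]
  congr 1
  · exact Finset.sum_congr rfl fun j _ => map_X _ _
  · exact MvPolynomial.map_C _ _

theorem iota_col (β' : Fin n → ℝ) (j : Fin n) :
    (iota (σ₂ := Fin n × Fin q) (colPoly m n β' j))
      = (∑ i, X (i, j)) - C (C (β' j)) := by
  rw [colPoly, map_sub, map_sum]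
  congr 1
  · exact Finset.sum_congr rfl fun i _ => map_X _ _
  · exact MvPolynomial.map_C _ _

theorem Phi_row (β : Fin n → ℝ) (hβ : ∀ j, β j ≠ 0) (α : Fin m → ℝ) (i : Fin m) :
    Phi β (rowPoly m q α i)
      = (∑ j, C (C (β j)⁻¹ * rowPoly n q β j) * X (i, j))
        + iota (rowPoly m n α i) := by
  rw [rowPoly, map_sub, map_sum, iota_row]
  have hsum : ∑ k : Fin q, Phi β (X (i, k))
      = ∑ j, C (C (β j)⁻¹ * (∑ k : Fin q, X (j, k)))
          * (X (i, j) : MvPolynomial (Fin m × Fin n) (MvPolynomial (Fin n × Fin q) ℝ)) := by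
    rw [Finset.sum_congr rfl fun k (_ : k ∈ Finset.univ) => Phi_X β i k]
    unfold gen
    rw [Finset.sum_comm]
    refine Finset.sum_congr rfl fun j _ => ?_
    rw [← Finset.sum_mul]
    congr 1
    rw [← map_sum, ← Finset.mul_sum]
  rw [hsum, Phi_C]
  have hterm : ∀ j : Fin n, C (C (β j)⁻¹ * (∑ k, X (j, k))) * X (i, j)
      = C (C (β j)⁻¹ * rowPoly n q β j) * X (i, j) + X (i, j) := by
    intro j
    rw [rowPoly, mul_sub, map_sub, sub_mul]
    have : C (β j)⁻¹ * C (β j) = (1 : MvPolynomial (Fin n × Fin q) ℝ) := by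
      rw [← C_mul, inv_mul_cancel₀ (hβ j), C_1]
    rw [this, C_1, one_mul]
    ring
  rw [Finset.sum_congr rfl fun j _ => hterm j, Finset.sum_add_distrib]
  ring

theorem Phi_col (β : Fin n → ℝ) (hβ : ∀ j, β j ≠ 0) (γ : Fin q → ℝ) (k : Fin q) :
    Phi β (colPoly m q γ k)
      = (∑ j, C (C (β j)⁻¹ * X (j, k)) * iota (σ₂ := Fin n × Fin q) (colPoly m n β j))
        + C (colPoly n q γ k) := by
  rw [colPoly, map_sub, map_sum]
  have hsum : ∑ i : Fin m, Phi β (X (i, k))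
      = ∑ j, C (C (β j)⁻¹ * X (j, k))
          * (∑ i : Fin m, (X (i, j) : MvPolynomial (Fin m × Fin n) (MvPolynomial (Fin n × Fin q) ℝ))) := by
    rw [Finset.sum_congr rfl fun i (_ : i ∈ Finset.univ) => Phi_X β i k]
    unfold gen
    rw [Finset.sum_comm]
    refine Finset.sum_congr rfl fun j _ => ?_
    rw [Finset.mul_sum]
  rw [hsum, Phi_C]
  have hterm : ∀ j : Fin n, C (C (β j)⁻¹ * X (j, k))
        * (∑ i : Fin m, (X (i, j) : MvPolynomial (Fin m × Fin n) (MvPolynomial (Fin n × Fin q) ℝ)))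
      = C (C (β j)⁻¹ * X (j, k)) * iota (σ₂ := Fin n × Fin q) (colPoly m n β j)
        + (C (X (j, k) : MvPolynomial (Fin n × Fin q) ℝ)
          : MvPolynomial (Fin m × Fin n) (MvPolynomial (Fin n × Fin q) ℝ)) := by
    intro j
    rw [iota_col, mul_sub]
    have h2 : C (C (β j)⁻¹ * X (j, k)) * (C (C (β j))
          : MvPolynomial (Fin m × Fin n) (MvPolynomial (Fin n × Fin q) ℝ))
        = C (X (j, k) : MvPolynomial (Fin n × Fin q) ℝ) := by
      rw [← map_mul]
      congr 1
      rw [show C (β j)⁻¹ * X (j, k) * C (β j) = (C (β j)⁻¹ * C (β j)) * X (j, k) by ring,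
        ← C_mul, inv_mul_cancel₀ (hβ j), C_1, one_mul]
    rw [h2]
    ring
  rw [Finset.sum_congr rfl fun j _ => hterm j, Finset.sum_add_distrib]
  have hCsum : ∑ j : Fin n, (C (X (j, k) : MvPolynomial (Fin n × Fin q) ℝ)
        : MvPolynomial (Fin m × Fin n) (MvPolynomial (Fin n × Fin q) ℝ))
      = C ((∑ j : Fin n, X (j, k)) : MvPolynomial (Fin n × Fin q) ℝ) := by
    rw [map_sum]
  rw [hCsum, colPoly, map_sub]
  ring

end GlueDecomp

section GlueFeas
variable {m n q r : ℕ}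
variable (α : Fin m → ℝ) (β : Fin n → ℝ) (γ : Fin q → ℝ)
variable (z₁ : ((Fin m × Fin n) →₀ ℕ) → ℝ) (z₂ : ((Fin n × Fin q) →₀ ℕ) → ℝ)

theorem Bdd_H (a b : (Fin m × Fin q) →₀ ℕ) (ha : mdeg a ≤ r - 1) (hb : mdeg b ≤ r - 1) :
    Bdd (2 * (r - 1)) (2 * (r - 1)) (Phi β (monomial a 1) * Phi β (monomial b 1)) := by
  have hda : (monomial a (1:ℝ)).totalDegree ≤ r - 1 :=
    le_trans (totalDegree_monomial_le a 1) ha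
  have hdb : (monomial b (1:ℝ)).totalDegree ≤ r - 1 :=
    le_trans (totalDegree_monomial_le b 1) hb
  have := Bdd_mul ((Bdd_Phi β (monomial a 1)).mono hda hda)
    ((Bdd_Phi β (monomial b 1)).mono hdb hdb)
  exact this.mono (by omega) (by omega)

theorem zg_zero (h1 : z₁ 0 = 1) (h2 : z₂ 0 = 1) : zg β z₁ z₂ 0 = 1 := by
  rw [zg, monomial_zero', C_1, map_one]
  have hone : (1 : MvPolynomial (Fin m × Fin n) (MvPolynomial (Fin n × Fin q) ℝ))
      = monomial 0 1 := by rw [monomial_zero', C_1]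
  rw [hone, T_monomial]
  have : riesz z₂ (monomial 0 1 : MvPolynomial (Fin n × Fin q) ℝ) = z₂ 0 := by
    rw [riesz_monomial, one_mul]
  rw [monomial_zero', C_1] at this
  rw [this, h1, h2, one_mul]

theorem zg_row (hβ : ∀ j, β j ≠ 0)
    (h1 : SFeas m n r α β z₁) (h2 : SFeas n q r β γ z₂) (i : Fin m) :
    locZero (zg β z₁ z₂) (rowPoly m q α i) (r - 1) := by
  intro a b ha hb
  rw [riesz_zg, map_mul, map_mul, mul_assoc, Phi_row β hβ α i, add_mul, T_add]
  set H := Phi β (monomial a 1) * Phi β (monomial b 1) with hHdef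
  have hH := Bdd_H β a b ha hb
  rw [Finset.sum_mul, T_sum]
  have hz : ∀ j : Fin n, T z₁ z₂ ((C (C (β j)⁻¹ * rowPoly n q β j) * X (i, j)) * H) = 0 := by
    intro j
    rw [mul_assoc]
    refine T_C_kill z₁ z₂ (D := 2 * (r - 1)) ?_ _ ?_
    · intro f hf
      rw [show (C (β j)⁻¹ * rowPoly n q β j) * f
          = C (β j)⁻¹ * (rowPoly n q β j * f) by ring, riesz_C_mul,
        locZero_kill (h2.2.2.1 j) f hf, mul_zero]
    · intro a'
      have := (Bdd_mul (Bdd_X (σ₂ := Fin n × Fin q) (i, j)) hH).2 a'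
      rw [← hHdef] at this
      omega
  rw [Finset.sum_congr rfl fun j _ => hz j, Finset.sum_const_zero, zero_add]
  exact T_iota_kill z₁ z₂ (D := 2 * (r - 1))
    (fun η hη => locZero_mono_kill (h1.2.2.1 i) η hη) H hH.1

theorem zg_col (hβ : ∀ j, β j ≠ 0)
    (h1 : SFeas m n r α β z₁) (h2 : SFeas n q r β γ z₂) (k : Fin q) :
    locZero (zg β z₁ z₂) (colPoly m q γ k) (r - 1) := by
  intro a b ha hb
  rw [riesz_zg, map_mul, map_mul, mul_assoc, Phi_col β hβ γ k, add_mul, T_add]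
  set H := Phi β (monomial a 1) * Phi β (monomial b 1) with hHdef
  have hH := Bdd_H β a b ha hb
  rw [← hHdef] at hH
  rw [Finset.sum_mul, T_sum]
  have hz : ∀ j : Fin n,
      T z₁ z₂ ((C (C (β j)⁻¹ * X (j, k)) * iota (σ₂ := Fin n × Fin q) (colPoly m n β j)) * H)
        = 0 := by
    intro j
    rw [show (C (C (β j)⁻¹ * X (j, k)) * iota (σ₂ := Fin n × Fin q) (colPoly m n β j)) * H
      = iota (σ₂ := Fin n × Fin q) (colPoly m n β j) * (C (C (β j)⁻¹ * X (j, k)) * H) by ring]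
    refine T_iota_kill z₁ z₂ (D := 2 * (r - 1))
      (fun η hη => locZero_mono_kill (h1.2.2.2.1 j) η hη) _ ?_
    have := (Bdd_mul (Bdd_C (σ₁ := Fin m × Fin n) (C (β j)⁻¹ * X (j, k))) hH).1
    omega
  rw [Finset.sum_congr rfl fun j _ => hz j, Finset.sum_const_zero, zero_add]
  refine T_C_kill z₁ z₂ (D := 2 * (r - 1)) ?_ _ (fun a' => hH.2 a')
  exact fun f hf => locZero_kill (h2.2.2.2.1 k) f hf

theorem zg_rowX (hβ : ∀ j, β j ≠ 0)
    (h1 : SFeas m n r α β z₁) (h2 : SFeas n q r β γ z₂) (i₁ i₂ : Fin m) (k₂ : Fin q) :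
    locZero (zg β z₁ z₂) (rowPoly m q α i₁ * X (i₂, k₂)) (r - 1) := by
  intro a b ha hb
  rw [riesz_zg, map_mul, map_mul, map_mul, Phi_X,
    show Phi β (rowPoly m q α i₁) * gen β i₂ k₂ * Phi β (monomial a 1) * Phi β (monomial b 1)
      = Phi β (rowPoly m q α i₁) * (gen β i₂ k₂ *
        (Phi β (monomial a 1) * Phi β (monomial b 1))) by ring,
    Phi_row β hβ α i₁]
  set H := Phi β (monomial a 1) * Phi β (monomial b 1) with hHdef
  have hH := Bdd_H β a b ha hb
  rw [← hHdef] at hH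
  rw [add_mul, T_add, Finset.sum_mul, T_sum]
  have hz : ∀ j : Fin n,
      T z₁ z₂ ((C (C (β j)⁻¹ * rowPoly n q β j) * X (i₁, j)) * (gen β i₂ k₂ * H)) = 0 := by
    intro j
    rw [gen, Finset.sum_mul, Finset.mul_sum, T_sum]
    refine Finset.sum_eq_zero fun j₂ _ => ?_
    rw [show (C (C (β j)⁻¹ * rowPoly n q β j) * X (i₁, j)) *
          ((C (C (β j₂)⁻¹ * X (j₂, k₂)) * X (i₂, j₂)) * H)
        = C ((C (β j)⁻¹ * rowPoly n q β j) * (C (β j₂)⁻¹ * X (j₂, k₂))) *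
          (X (i₁, j) * (X (i₂, j₂) * H)) by simp only [C_mul]; ring]
    refine T_C_kill z₁ z₂ (D := 2 * (r - 1)) ?_ _ ?_
    · intro f hf
      rw [show (C (β j)⁻¹ * rowPoly n q β j) * (C (β j₂)⁻¹ * X (j₂, k₂)) * f
          = C (β j)⁻¹ * (C (β j₂)⁻¹ * ((rowPoly n q β j * X (j₂, k₂)) * f)) by ring,
        riesz_C_mul, riesz_C_mul, locZero_kill (h2.2.2.2.2.1 j j₂ k₂) f hf,
        mul_zero, mul_zero]
    · intro a'
      have := (Bdd_mul (Bdd_X (σ₂ := Fin n × Fin q) (i₁, j))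
        (Bdd_mul (Bdd_X (i₂, j₂)) hH)).2 a'
      omega
  rw [Finset.sum_congr rfl fun j _ => hz j, Finset.sum_const_zero, zero_add]
  rw [gen, Finset.sum_mul, Finset.mul_sum, T_sum]
  refine Finset.sum_eq_zero fun j₂ _ => ?_
  rw [show iota (σ₂ := Fin n × Fin q) (rowPoly m n α i₁) *
        ((C (C (β j₂)⁻¹ * X (j₂, k₂)) * X (i₂, j₂)) * H)
      = iota (σ₂ := Fin n × Fin q) (rowPoly m n α i₁ * X (i₂, j₂)) *
        (C (C (β j₂)⁻¹ * X (j₂, k₂)) * H) by rw [iota_mul, iota_X]; ring]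
  refine T_iota_kill z₁ z₂ (D := 2 * (r - 1))
    (fun η hη => locZero_mono_kill (h1.2.2.2.2.1 i₁ i₂ j₂) η hη) _ ?_
  have := (Bdd_mul (Bdd_C (σ₁ := Fin m × Fin n) (C (β j₂)⁻¹ * X (j₂, k₂))) hH).1
  omega

theorem zg_colX (hβ : ∀ j, β j ≠ 0)
    (h1 : SFeas m n r α β z₁) (h2 : SFeas n q r β γ z₂) (k₁ k₂ : Fin q) (i : Fin m) :
    locZero (zg β z₁ z₂) (colPoly m q γ k₁ * X (i, k₂)) (r - 1) := by
  intro a b ha hb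
  rw [riesz_zg, map_mul, map_mul, map_mul, Phi_X,
    show Phi β (colPoly m q γ k₁) * gen β i k₂ * Phi β (monomial a 1) * Phi β (monomial b 1)
      = Phi β (colPoly m q γ k₁) * (gen β i k₂ *
        (Phi β (monomial a 1) * Phi β (monomial b 1))) by ring,
    Phi_col β hβ γ k₁]
  set H := Phi β (monomial a 1) * Phi β (monomial b 1) with hHdef
  have hH := Bdd_H β a b ha hb
  rw [← hHdef] at hH
  rw [add_mul, T_add, Finset.sum_mul, T_sum]
  have hz : ∀ j : Fin n,
      T z₁ z₂ ((C (C (β j)⁻¹ * X (j, k₁)) * iota (σ₂ := Fin n × Fin q) (colPoly m n β j)) *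
        (gen β i k₂ * H)) = 0 := by
    intro j
    rw [gen, Finset.sum_mul, Finset.mul_sum, T_sum]
    refine Finset.sum_eq_zero fun j₂ _ => ?_
    rw [show (C (C (β j)⁻¹ * X (j, k₁)) * iota (σ₂ := Fin n × Fin q) (colPoly m n β j)) *
          ((C (C (β j₂)⁻¹ * X (j₂, k₂)) * X (i, j₂)) * H)
        = iota (σ₂ := Fin n × Fin q) (colPoly m n β j * X (i, j₂)) *
          (C ((C (β j)⁻¹ * X (j, k₁)) * (C (β j₂)⁻¹ * X (j₂, k₂))) * H) by
          rw [iota_mul, iota_X]; simp only [C_mul]; ring]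
    refine T_iota_kill z₁ z₂ (D := 2 * (r - 1))
      (fun η hη => locZero_mono_kill (h1.2.2.2.2.2 j j₂ i) η hη) _ ?_
    have := (Bdd_mul (Bdd_C (σ₁ := Fin m × Fin n)
      ((C (β j)⁻¹ * X (j, k₁)) * (C (β j₂)⁻¹ * X (j₂, k₂)))) hH).1
    omega
  rw [Finset.sum_congr rfl fun j _ => hz j, Finset.sum_const_zero, zero_add]
  rw [gen, Finset.sum_mul, Finset.mul_sum, T_sum]
  refine Finset.sum_eq_zero fun j₂ _ => ?_
  rw [show C (colPoly n q γ k₁) * ((C (C (β j₂)⁻¹ * X (j₂, k₂)) * X (i, j₂)) * H)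
      = C (colPoly n q γ k₁ * (C (β j₂)⁻¹ * X (j₂, k₂))) * (X (i, j₂) * H) by
        simp only [C_mul]; ring]
  refine T_C_kill z₁ z₂ (D := 2 * (r - 1)) ?_ _ ?_
  · intro f hf
    rw [show colPoly n q γ k₁ * (C (β j₂)⁻¹ * X (j₂, k₂)) * f
        = C (β j₂)⁻¹ * ((colPoly n q γ k₁ * X (j₂, k₂)) * f) by ring,
      riesz_C_mul, locZero_kill (h2.2.2.2.2.2 k₁ k₂ j₂) f hf, mul_zero]
  · intro a'
    have := (Bdd_mul (Bdd_X (σ₂ := Fin n × Fin q) (i, j₂)) hH).2 a'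
    omega

theorem zg_psd (hβpos : ∀ j, 0 < β j)
    (h1 : SFeas m n r α β z₁) (h2 : SFeas n q r β γ z₂) :
    ∀ I : Finset (Fin m × Fin q), I.card ≤ 2 * r →
      locPSD (zg β z₁ z₂) (eI I) (r - (I.card + 1) / 2) := by
  classical
  intro I hI P hP
  have hm₁ : MonPSD z₁ r := monPSD_of_schmudgen z₁ h1.2.1
  have hm₂ : MonPSD z₂ r := monPSD_of_schmudgen z₂ h2.2.1
  rw [show eI I * P ^ 2 = eI I * (P * P) by ring, riesz_zg, map_mul, map_mul]
  have hPhiE : Phi β (eI I) = ∑ J ∈ I.pi (fun _ => (Finset.univ : Finset (Fin n))),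
      (∏ x ∈ I.attach, (β (J x.1 x.2))⁻¹) •
        monomial (∑ x ∈ I.attach, Finsupp.single ((x : Fin m × Fin q).1, J x.1 x.2) 1)
          ((monomial (∑ x ∈ I.attach, Finsupp.single (J x.1 x.2, (x : Fin m × Fin q).2) 1) 1
            : MvPolynomial (Fin n × Fin q) ℝ)) := by
    rw [eI, map_prod]
    rw [Finset.prod_congr rfl fun x (_ : x ∈ I) =>
      (show Phi β (X x) = gen β x.1 x.2 from Phi_X β x.1 x.2)]
    unfold gen
    rw [Finset.prod_sum]
    refine Finset.sum_congr rfl fun J _ => ?_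
    rw [Finset.prod_mul_distrib, ← map_prod, Finset.prod_mul_distrib, ← map_prod,
      prod_X_eq_monomial, prod_X_eq_monomial]
    rw [C_mul_monomial, C_mul_monomial, mul_one, mul_one, smul_monomial, smul_monomial, smul_eq_mul, mul_one]
  rw [hPhiE, Finset.sum_mul, T_sum]
  refine Finset.sum_nonneg fun J _ => ?_
  rw [smul_mul_assoc, T_smul]
  refine mul_nonneg (Finset.prod_nonneg fun x _ => inv_nonneg.mpr (le_of_lt (hβpos _))) ?_
  have hmd1 : mdeg (∑ x ∈ I.attach, Finsupp.single ((x : Fin m × Fin q).1, J x.1 x.2) 1)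
      = I.card := by
    rw [mdeg_finsetSum]
    simp
  have hmd2 : mdeg (∑ x ∈ I.attach, Finsupp.single (J x.1 x.2, (x : Fin m × Fin q).2) 1)
      = I.card := by
    rw [mdeg_finsetSum]
    simp
  have hB := Bdd_Phi β P
  refine T_PSD z₁ z₂ hm₁ hm₂ _ _ _ P.totalDegree P.totalDegree hB.1 hB.2 ?_ ?_
  · rw [hmd1]; omega
  · rw [hmd2]; omega

theorem SFeas_zg (hβpos : ∀ j, 0 < β j)
    (h1 : SFeas m n r α β z₁) (h2 : SFeas n q r β γ z₂) :
    SFeas m q r α γ (zg β z₁ z₂) := by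
  have hβ : ∀ j, β j ≠ 0 := fun j => ne_of_gt (hβpos j)
  exact ⟨zg_zero β z₁ z₂ h1.1 h2.1, zg_psd α β γ z₁ z₂ hβpos h1 h2,
    zg_row α β γ z₁ z₂ hβ h1 h2, zg_col α β γ z₁ z₂ hβ h1 h2,
    zg_rowX α β γ z₁ z₂ hβ h1 h2, zg_colX α β γ z₁ z₂ hβ h1 h2⟩

end GlueFeas

section Moments
variable {σ : Type*}

theorem X_mul_X {R : Type*} [CommSemiring R] (u v : σ) : (X u * X v : MvPolynomial σ R)
    = monomial (Finsupp.single u 1 + Finsupp.single v 1) 1 := by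
  rw [X, X, monomial_mul, one_mul]

theorem riesz_X (z : (σ →₀ ℕ) → ℝ) (v : σ) : riesz z (X v) = z (Finsupp.single v 1) := by
  rw [X, riesz_monomial, one_mul]

theorem riesz_XX (z : (σ →₀ ℕ) → ℝ) (u v : σ) :
    riesz z (X u * X v) = z (Finsupp.single u 1 + Finsupp.single v 1) := by
  rw [X_mul_X, riesz_monomial, one_mul]

theorem riesz_C (z : (σ →₀ ℕ) → ℝ) (c : ℝ) : riesz z (C c) = c * z 0 := by
  rw [← monomial_zero', riesz_monomial]

theorem mom_nonneg {z : (σ →₀ ℕ) → ℝ} {r : ℕ} (hm : MonPSD z r) (hr : 1 ≤ r) (u v : σ) :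
    0 ≤ z (Finsupp.single u 1 + Finsupp.single v 1) := by
  have h := hm (Finsupp.single u 1 + Finsupp.single v 1) 1
    (by rw [mdeg_add, mdeg_single, mdeg_single, totalDegree_one]; omega)
  rwa [mul_one, mul_one, riesz_monomial, one_mul] at h

end Moments

section Marginals
variable {a b : ℕ} (μ : Fin a → ℝ) (ν : Fin b → ℝ) (z : ((Fin a × Fin b) →₀ ℕ) → ℝ)

/-- row marginal of second moments -/
theorem marg_row2 {r : ℕ} (h : SFeas a b r μ ν z) (i i' : Fin a) (j' : Fin b) :
    ∑ j, z (Finsupp.single (i, j) 1 + Finsupp.single (i', j') 1)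
      = μ i * z (Finsupp.single (i', j') 1) := by
  have h5 := h.2.2.2.2.1 i i' j' 0 0 (by simp) (by simp)
  rw [monomial_zero', C_1, mul_one, mul_one, rowPoly, sub_mul, riesz_sub, Finset.sum_mul,
    riesz_sum] at h5
  rw [Finset.sum_congr rfl fun j (_ : j ∈ Finset.univ) => riesz_XX z (i, j) (i', j')] at h5
  rw [show C (μ i) * X (i', j') = C (μ i) * X (i', j') from rfl, riesz_C_mul, riesz_X] at h5
  linarith

/-- row marginal of first moments -/
theorem marg_row1 {r : ℕ} (h : SFeas a b r μ ν z) (i : Fin a) :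
    ∑ j, z (Finsupp.single (i, j) 1) = μ i := by
  have h3 := h.2.2.1 i 0 0 (by simp) (by simp)
  rw [monomial_zero', C_1, mul_one, mul_one, rowPoly, riesz_sub, riesz_sum, riesz_C] at h3
  rw [Finset.sum_congr rfl fun j (_ : j ∈ Finset.univ) => riesz_X z (i, j), h.1] at h3
  linarith

/-- column marginal of second moments -/
theorem marg_col2 {r : ℕ} (h : SFeas a b r μ ν z) (j : Fin b) (i' : Fin a) (j' : Fin b) :
    ∑ i, z (Finsupp.single (i, j) 1 + Finsupp.single (i', j') 1)
      = ν j * z (Finsupp.single (i', j') 1) := by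
  have h6 := h.2.2.2.2.2 j j' i' 0 0 (by simp) (by simp)
  rw [monomial_zero', C_1, mul_one, mul_one, colPoly, sub_mul, riesz_sub, Finset.sum_mul,
    riesz_sum] at h6
  rw [Finset.sum_congr rfl fun i (_ : i ∈ Finset.univ) => riesz_XX z (i, j) (i', j')] at h6
  rw [riesz_C_mul, riesz_X] at h6
  linarith

/-- column marginal of first moments -/
theorem marg_col1 {r : ℕ} (h : SFeas a b r μ ν z) (j : Fin b) :
    ∑ i, z (Finsupp.single (i, j) 1) = ν j := by
  have h4 := h.2.2.2.1 j 0 0 (by simp) (by simp)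
  rw [monomial_zero', C_1, mul_one, mul_one, colPoly, riesz_sub, riesz_sum, riesz_C] at h4
  rw [Finset.sum_congr rfl fun i (_ : i ∈ Finset.univ) => riesz_X z (i, j), h.1] at h4
  linarith

end Marginals

section Mom2
variable {m n q : ℕ} (β : Fin n → ℝ)
variable (z₁ : ((Fin m × Fin n) →₀ ℕ) → ℝ) (z₂ : ((Fin n × Fin q) →₀ ℕ) → ℝ)

theorem zg_mom2 (i i' : Fin m) (k k' : Fin q) :
    zg β z₁ z₂ (Finsupp.single (i, k) 1 + Finsupp.single (i', k') 1)
      = ∑ j, ∑ j', (β j)⁻¹ * (β j')⁻¹ *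
          z₁ (Finsupp.single (i, j) 1 + Finsupp.single (i', j') 1) *
          z₂ (Finsupp.single (j, k) 1 + Finsupp.single (j', k') 1) := by
  rw [zg, ← X_mul_X, map_mul, Phi_X, Phi_X]
  unfold gen
  rw [Finset.sum_mul_sum, T_sum]
  refine Finset.sum_congr rfl fun j _ => ?_
  rw [T_sum]
  refine Finset.sum_congr rfl fun j' _ => ?_
  have key : (C (C (β j)⁻¹ * X (j, k)) * X (i, j)) * (C (C (β j')⁻¹ * X (j', k')) * X (i', j'))
      = monomial (Finsupp.single (i, j) 1 + Finsupp.single (i', j') 1)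
          ((monomial (Finsupp.single (j, k) 1 + Finsupp.single (j', k') 1)
            ((β j)⁻¹ * (β j')⁻¹)) : MvPolynomial (Fin n × Fin q) ℝ) := by
    rw [show (C (C (β j)⁻¹ * X (j, k)) * X (i, j)) *
          (C (C (β j')⁻¹ * X (j', k')) * X (i', j'))
        = C ((C (β j)⁻¹ * X (j, k)) * (C (β j')⁻¹ * X (j', k'))) * (X (i, j) * X (i', j')) by
        simp only [C_mul]; ring,
      show (C (β j)⁻¹ * X (j, k)) * (C (β j')⁻¹ * X (j', k'))
        = (C (β j)⁻¹ * C (β j')⁻¹) * (X (j, k) * X (j', k')) by ring,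
      ← C_mul, X_mul_X, C_mul_monomial, mul_one, X_mul_X, C_mul_monomial, mul_one]
  rw [key, T_monomial, riesz_monomial]
  ring

end Mom2

section ProdFeas
variable {a b : ℕ}

/-- moments of the product measure -/
noncomputable def zprod (μ : Fin a → ℝ) (ν : Fin b → ℝ) (η : (Fin a × Fin b) →₀ ℕ) : ℝ :=
  η.prod fun x e => (μ x.1 * ν x.2) ^ e

theorem riesz_zprod (μ : Fin a → ℝ) (ν : Fin b → ℝ) (f : MvPolynomial (Fin a × Fin b) ℝ) :
    riesz (zprod μ ν) f = eval (fun x : Fin a × Fin b => μ x.1 * ν x.2) f := by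
  induction f using MvPolynomial.induction_on' with
  | monomial u c => rw [riesz_monomial, eval_monomial, zprod]
  | add p q hp hq => rw [riesz_add, map_add, hp, hq]

theorem SFeas_zprod {r : ℕ} (μ : Fin a → ℝ) (ν : Fin b → ℝ)
    (hμ : IsProbVec μ) (hν : IsProbVec ν) : SFeas a b r μ ν (zprod μ ν) := by
  have hrow : ∀ i, eval (fun x : Fin a × Fin b => μ x.1 * ν x.2) (rowPoly a b μ i) = 0 := by
    intro i
    rw [rowPoly, map_sub, map_sum, eval_C]
    rw [Finset.sum_congr rfl fun j (_ : j ∈ Finset.univ) =>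
      eval_X (f := fun x : Fin a × Fin b => μ x.1 * ν x.2) (i, j)]
    have heq : ∀ j : Fin b, μ (i, j).1 * ν (i, j).2 = μ i * ν j := fun j => rfl
    rw [Finset.sum_congr rfl fun j _ => heq j, ← Finset.mul_sum, hν.2, mul_one, sub_self]
  have hcol : ∀ j, eval (fun x : Fin a × Fin b => μ x.1 * ν x.2) (colPoly a b ν j) = 0 := by
    intro j
    rw [colPoly, map_sub, map_sum, eval_C]
    rw [Finset.sum_congr rfl fun i (_ : i ∈ Finset.univ) =>
      eval_X (f := fun x : Fin a × Fin b => μ x.1 * ν x.2) (i, j)]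
    have heq : ∀ i : Fin a, μ (i, j).1 * ν (i, j).2 = μ i * ν j := fun i => rfl
    rw [Finset.sum_congr rfl fun i _ => heq i, ← Finset.sum_mul, hμ.2, one_mul, sub_self]
  refine ⟨?_, ?_, ?_, ?_, ?_, ?_⟩
  · rw [zprod, Finsupp.prod_zero_index]
  · intro I hI P hP
    rw [riesz_zprod, map_mul, map_pow]
    refine mul_nonneg ?_ (pow_two_nonneg _)
    rw [eI, map_prod]
    refine Finset.prod_nonneg fun x _ => ?_
    rw [eval_X]
    exact mul_nonneg (hμ.1 _) (hν.1 _)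
  · intro i a' b' _ _
    rw [riesz_zprod, map_mul, map_mul, hrow i, zero_mul, zero_mul]
  · intro j a' b' _ _
    rw [riesz_zprod, map_mul, map_mul, hcol j, zero_mul, zero_mul]
  · intro i₁ i₂ j a' b' _ _
    rw [riesz_zprod, map_mul, map_mul, map_mul, hrow i₁, zero_mul, zero_mul, zero_mul]
  · intro j₁ j₂ i a' b' _ _
    rw [riesz_zprod, map_mul, map_mul, map_mul, hcol j₁, zero_mul, zero_mul, zero_mul]

theorem objS_nonneg {r : ℕ} (hr : 1 ≤ r) (μ : Fin a → ℝ) (ν : Fin b → ℝ)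
    (z : ((Fin a × Fin b) →₀ ℕ) → ℝ) (h : SFeas a b r μ ν z)
    (L : Fin a → Fin b → Fin a → Fin b → ℝ) (hL : ∀ i j k l, 0 ≤ L i j k l) :
    0 ≤ objS a b L z := by
  have hm := monPSD_of_schmudgen z h.2.1
  refine Finset.sum_nonneg fun i _ => Finset.sum_nonneg fun j _ =>
    Finset.sum_nonneg fun k _ => Finset.sum_nonneg fun l _ =>
      mul_nonneg (hL i j k l) (mom_nonneg hm hr _ _)

end ProdFeas

section ObjGlue
variable {m n q r : ℕ}

theorem sum2_z2 (β : Fin n → ℝ) (γ : Fin q → ℝ) (z₂ : ((Fin n × Fin q) →₀ ℕ) → ℝ)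
    (h2 : SFeas n q r β γ z₂) (j j' : Fin n) :
    ∑ k, ∑ k', z₂ (Finsupp.single (j, k) 1 + Finsupp.single (j', k') 1) = β j * β j' := by
  have hin : ∀ k, ∑ k', z₂ (Finsupp.single (j, k) 1 + Finsupp.single (j', k') 1)
      = β j' * z₂ (Finsupp.single (j, k) 1) := by
    intro k
    rw [Finset.sum_congr rfl fun k' (_ : k' ∈ Finset.univ) => congrArg z₂ (add_comm _ _)]
    exact marg_row2 β γ z₂ h2 j' j k
  rw [Finset.sum_congr rfl fun k _ => hin k, ← Finset.mul_sum, marg_row1 β γ z₂ h2 j]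
  ring

theorem sum2_z1 (α : Fin m → ℝ) (β : Fin n → ℝ) (z₁ : ((Fin m × Fin n) →₀ ℕ) → ℝ)
    (h1 : SFeas m n r α β z₁) (j j' : Fin n) :
    ∑ i, ∑ i', z₁ (Finsupp.single (i, j) 1 + Finsupp.single (i', j') 1) = β j * β j' := by
  have hin : ∀ i, ∑ i', z₁ (Finsupp.single (i, j) 1 + Finsupp.single (i', j') 1)
      = β j' * z₁ (Finsupp.single (i, j) 1) := by
    intro i
    rw [Finset.sum_congr rfl fun i' (_ : i' ∈ Finset.univ) => congrArg z₁ (add_comm _ _)]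
    exact marg_col2 α β z₁ h1 j' i j
  rw [Finset.sum_congr rfl fun i _ => hin i, ← Finset.mul_sum, marg_col1 α β z₁ h1 j]
  ring

theorem glue_obj_le (hr : 1 ≤ r)
    (α : Fin m → ℝ) (β : Fin n → ℝ) (γ : Fin q → ℝ) (hβpos : ∀ j, 0 < β j)
    (dX : Fin m → Fin m → ℝ) (dY : Fin n → Fin n → ℝ) (dZ : Fin q → Fin q → ℝ)
    (p : ℝ) (hp : 1 ≤ p)
    (z₁ : ((Fin m × Fin n) →₀ ℕ) → ℝ) (z₂ : ((Fin n × Fin q) →₀ ℕ) → ℝ)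
    (h1 : SFeas m n r α β z₁) (h2 : SFeas n q r β γ z₂) :
    objS m q (distCost m q dX dZ p) (zg β z₁ z₂)
      ≤ ((objS m n (distCost m n dX dY p) z₁) ^ (1/p)
          + (objS n q (distCost n q dY dZ p) z₂) ^ (1/p)) ^ p := by
  classical
  have hp0 : 0 < p := lt_of_lt_of_le one_pos hp
  have hm₁ : MonPSD z₁ r := monPSD_of_schmudgen z₁ h1.2.1
  have hm₂ : MonPSD z₂ r := monPSD_of_schmudgen z₂ h2.2.1
  set Wf : (Fin m × Fin n × Fin m × Fin n × Fin q × Fin q) → ℝ := fun t =>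
      (β t.2.1)⁻¹ * (β t.2.2.2.1)⁻¹ *
      z₁ (Finsupp.single (t.1, t.2.1) 1 + Finsupp.single (t.2.2.1, t.2.2.2.1) 1) *
      z₂ (Finsupp.single (t.2.1, t.2.2.2.2.1) 1 +
        Finsupp.single (t.2.2.2.1, t.2.2.2.2.2) 1) with hWf
  set Af : (Fin m × Fin n × Fin m × Fin n × Fin q × Fin q) → ℝ := fun t =>
      |dX t.1 t.2.2.1 - dY t.2.1 t.2.2.2.1| with hAf
  set Bf : (Fin m × Fin n × Fin m × Fin n × Fin q × Fin q) → ℝ := fun t =>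
      |dY t.2.1 t.2.2.2.1 - dZ t.2.2.2.2.1 t.2.2.2.2.2| with hBf
  set Cf : (Fin m × Fin n × Fin m × Fin n × Fin q × Fin q) → ℝ := fun t =>
      |dX t.1 t.2.2.1 - dZ t.2.2.2.2.1 t.2.2.2.2.2| with hCf
  have hWnn : ∀ t, 0 ≤ Wf t := by
    intro t
    refine mul_nonneg (mul_nonneg (mul_nonneg ?_ ?_) ?_) ?_
    · exact inv_nonneg.mpr (le_of_lt (hβpos _))
    · exact inv_nonneg.mpr (le_of_lt (hβpos _))
    · exact mom_nonneg hm₁ hr _ _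
    · exact mom_nonneg hm₂ hr _ _
  -- Step 1: objective of the glued sequence
  have step1 : objS m q (distCost m q dX dZ p) (zg β z₁ z₂)
      = ∑ t : Fin m × Fin n × Fin m × Fin n × Fin q × Fin q, Wf t * Cf t ^ p := by
    have hperm : ∑ t : Fin m × Fin n × Fin m × Fin n × Fin q × Fin q, Wf t * Cf t ^ p
        = ∑ u : Fin m × Fin q × Fin m × Fin q × Fin n × Fin n,
            Wf (u.1, u.2.2.2.2.1, u.2.2.1, u.2.2.2.2.2, u.2.1, u.2.2.2.1)
              * Cf (u.1, u.2.2.2.2.1, u.2.2.1, u.2.2.2.2.2, u.2.1, u.2.2.2.1) ^ p :=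
      (Fintype.sum_equiv
        ⟨fun u => (u.1, u.2.2.2.2.1, u.2.2.1, u.2.2.2.2.2, u.2.1, u.2.2.2.1),
         fun t => (t.1, t.2.2.2.2.1, t.2.2.1, t.2.2.2.2.2, t.2.1, t.2.2.2.1),
         fun u => rfl, fun t => rfl⟩
        (fun u => Wf (u.1, u.2.2.2.2.1, u.2.2.1, u.2.2.2.2.2, u.2.1, u.2.2.2.1)
          * Cf (u.1, u.2.2.2.2.1, u.2.2.1, u.2.2.2.2.2, u.2.1, u.2.2.2.1) ^ p)
        (fun t => Wf t * Cf t ^ p) (fun u => rfl)).symm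
    rw [hperm, hWf, hCf]
    simp only [objS, Fintype.sum_prod_type]
    refine Finset.sum_congr rfl fun i _ => Finset.sum_congr rfl fun k _ =>
      Finset.sum_congr rfl fun i' _ => Finset.sum_congr rfl fun k' _ => ?_
    rw [zg_mom2 β z₁ z₂ i i' k k', Finset.mul_sum]
    refine Finset.sum_congr rfl fun j _ => ?_
    rw [Finset.mul_sum]
    refine Finset.sum_congr rfl fun j' _ => ?_
    simp only [distCost]
    ring
  -- Step 2/3: pointwise bound and rewrite as p-th powers
  have step2 : ∑ t : Fin m × Fin n × Fin m × Fin n × Fin q × Fin q, Wf t * Cf t ^ p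
      ≤ ∑ t : Fin m × Fin n × Fin m × Fin n × Fin q × Fin q,
          (Wf t ^ (1/p) * Af t + Wf t ^ (1/p) * Bf t) ^ p := by
    refine Finset.sum_le_sum fun t _ => ?_
    have habs : Cf t ≤ Af t + Bf t := abs_sub_le _ _ _
    have h1' : Wf t * Cf t ^ p ≤ Wf t * (Af t + Bf t) ^ p := by
      refine mul_le_mul_of_nonneg_left ?_ (hWnn t)
      exact Real.rpow_le_rpow (abs_nonneg _) habs (le_of_lt hp0)
    refine le_trans h1' (le_of_eq ?_)
    rw [← mul_add, Real.mul_rpow (Real.rpow_nonneg (hWnn t) _)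
      (add_nonneg (abs_nonneg _) (abs_nonneg _)), ← Real.rpow_mul (hWnn t),
      one_div_mul_cancel (ne_of_gt hp0), Real.rpow_one]
  -- Step 4: Minkowski
  have step4 : (∑ t : Fin m × Fin n × Fin m × Fin n × Fin q × Fin q,
        (Wf t ^ (1/p) * Af t + Wf t ^ (1/p) * Bf t) ^ p) ^ (1/p)
      ≤ (∑ t : Fin m × Fin n × Fin m × Fin n × Fin q × Fin q,
          (Wf t ^ (1/p) * Af t) ^ p) ^ (1/p)
        + (∑ t : Fin m × Fin n × Fin m × Fin n × Fin q × Fin q,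
            (Wf t ^ (1/p) * Bf t) ^ p) ^ (1/p) := by
    refine Real.Lp_add_le_of_nonneg Finset.univ hp ?_ ?_
    · exact fun t _ => mul_nonneg (Real.rpow_nonneg (hWnn t) _) (abs_nonneg _)
    · exact fun t _ => mul_nonneg (Real.rpow_nonneg (hWnn t) _) (abs_nonneg _)
  -- Step 5a: marginalize out (k, k')
  have step5a : ∑ t : Fin m × Fin n × Fin m × Fin n × Fin q × Fin q,
        (Wf t ^ (1/p) * Af t) ^ p
      = objS m n (distCost m n dX dY p) z₁ := by
    have hpt : ∀ t, (Wf t ^ (1/p) * Af t) ^ p = Wf t * Af t ^ p := by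
      intro t
      rw [Real.mul_rpow (Real.rpow_nonneg (hWnn t) _) (abs_nonneg _),
        ← Real.rpow_mul (hWnn t), one_div_mul_cancel (ne_of_gt hp0), Real.rpow_one]
    rw [Finset.sum_congr rfl fun t _ => hpt t, hWf, hAf]
    simp only [objS, Fintype.sum_prod_type]
    refine Finset.sum_congr rfl fun i _ => Finset.sum_congr rfl fun j _ =>
      Finset.sum_congr rfl fun i' _ => Finset.sum_congr rfl fun j' _ => ?_
    have hc : ∑ k, ∑ k', ((β j)⁻¹ * (β j')⁻¹ *
          z₁ (Finsupp.single (i, j) 1 + Finsupp.single (i', j') 1) *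
          z₂ (Finsupp.single (j, k) 1 + Finsupp.single (j', k') 1)) *
            |dX i i' - dY j j'| ^ p
        = ((β j)⁻¹ * (β j')⁻¹ *
            z₁ (Finsupp.single (i, j) 1 + Finsupp.single (i', j') 1) *
            |dX i i' - dY j j'| ^ p) *
          ∑ k, ∑ k', z₂ (Finsupp.single (j, k) 1 + Finsupp.single (j', k') 1) := by
      rw [Finset.mul_sum]
      refine Finset.sum_congr rfl fun k _ => ?_
      rw [Finset.mul_sum]
      exact Finset.sum_congr rfl fun k' _ => by ring
    rw [hc, sum2_z2 β γ z₂ h2 j j']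
    simp only [distCost]
    rw [show ((β j)⁻¹ * (β j')⁻¹ *
          z₁ (Finsupp.single (i, j) 1 + Finsupp.single (i', j') 1) *
          |dX i i' - dY j j'| ^ p) * (β j * β j')
        = (|dX i i' - dY j j'| ^ p *
            z₁ (Finsupp.single (i, j) 1 + Finsupp.single (i', j') 1)) *
          (((β j)⁻¹ * β j) * ((β j')⁻¹ * β j')) from by ring,
      inv_mul_cancel₀ (ne_of_gt (hβpos j)), inv_mul_cancel₀ (ne_of_gt (hβpos j')),
      mul_one, mul_one]
  -- Step 5b: marginalize out (i, i')
  have step5b : ∑ t : Fin m × Fin n × Fin m × Fin n × Fin q × Fin q,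
        (Wf t ^ (1/p) * Bf t) ^ p
      = objS n q (distCost n q dY dZ p) z₂ := by
    have hpt : ∀ t, (Wf t ^ (1/p) * Bf t) ^ p = Wf t * Bf t ^ p := by
      intro t
      rw [Real.mul_rpow (Real.rpow_nonneg (hWnn t) _) (abs_nonneg _),
        ← Real.rpow_mul (hWnn t), one_div_mul_cancel (ne_of_gt hp0), Real.rpow_one]
    rw [Finset.sum_congr rfl fun t _ => hpt t]
    have hperm : ∑ t : Fin m × Fin n × Fin m × Fin n × Fin q × Fin q, Wf t * Bf t ^ p
        = ∑ u : Fin n × Fin q × Fin n × Fin q × Fin m × Fin m,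
            Wf (u.2.2.2.2.1, u.1, u.2.2.2.2.2, u.2.2.1, u.2.1, u.2.2.2.1)
              * Bf (u.2.2.2.2.1, u.1, u.2.2.2.2.2, u.2.2.1, u.2.1, u.2.2.2.1) ^ p :=
      (Fintype.sum_equiv
        ⟨fun u => (u.2.2.2.2.1, u.1, u.2.2.2.2.2, u.2.2.1, u.2.1, u.2.2.2.1),
         fun t => (t.2.1, t.2.2.2.2.1, t.2.2.2.1, t.2.2.2.2.2, t.1, t.2.2.1),
         fun u => rfl, fun t => rfl⟩
        (fun u => Wf (u.2.2.2.2.1, u.1, u.2.2.2.2.2, u.2.2.1, u.2.1, u.2.2.2.1)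
          * Bf (u.2.2.2.2.1, u.1, u.2.2.2.2.2, u.2.2.1, u.2.1, u.2.2.2.1) ^ p)
        (fun t => Wf t * Bf t ^ p) (fun u => rfl)).symm
    rw [hperm, hWf, hBf]
    simp only [objS, Fintype.sum_prod_type]
    refine Finset.sum_congr rfl fun j _ => Finset.sum_congr rfl fun k _ =>
      Finset.sum_congr rfl fun j' _ => Finset.sum_congr rfl fun k' _ => ?_
    have hc : ∑ i : Fin m, ∑ i' : Fin m, ((β j)⁻¹ * (β j')⁻¹ *
          z₁ (Finsupp.single (i, j) 1 + Finsupp.single (i', j') 1) *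
          z₂ (Finsupp.single (j, k) 1 + Finsupp.single (j', k') 1)) *
            |dY j j' - dZ k k'| ^ p
        = ((β j)⁻¹ * (β j')⁻¹ *
            z₂ (Finsupp.single (j, k) 1 + Finsupp.single (j', k') 1) *
            |dY j j' - dZ k k'| ^ p) *
          ∑ i : Fin m, ∑ i' : Fin m,
            z₁ (Finsupp.single (i, j) 1 + Finsupp.single (i', j') 1) := by
      rw [Finset.mul_sum]
      refine Finset.sum_congr rfl fun i _ => ?_
      rw [Finset.mul_sum]
      exact Finset.sum_congr rfl fun i' _ => by ring
    rw [hc, sum2_z1 α β z₁ h1 j j']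
    simp only [distCost]
    rw [show ((β j)⁻¹ * (β j')⁻¹ *
          z₂ (Finsupp.single (j, k) 1 + Finsupp.single (j', k') 1) *
          |dY j j' - dZ k k'| ^ p) * (β j * β j')
        = (|dY j j' - dZ k k'| ^ p *
            z₂ (Finsupp.single (j, k) 1 + Finsupp.single (j', k') 1)) *
          (((β j)⁻¹ * β j) * ((β j')⁻¹ * β j')) from by ring,
      inv_mul_cancel₀ (ne_of_gt (hβpos j)), inv_mul_cancel₀ (ne_of_gt (hβpos j')),
      mul_one, mul_one]
  -- assemble
  rw [step1]
  refine le_trans step2 ?_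
  have hXnn : 0 ≤ ∑ t : Fin m × Fin n × Fin m × Fin n × Fin q × Fin q,
      (Wf t ^ (1/p) * Af t + Wf t ^ (1/p) * Bf t) ^ p :=
    Finset.sum_nonneg fun t _ => Real.rpow_nonneg
      (add_nonneg (mul_nonneg (Real.rpow_nonneg (hWnn t) _) (abs_nonneg _))
        (mul_nonneg (Real.rpow_nonneg (hWnn t) _) (abs_nonneg _))) _
  have hcollapse : ((∑ t : Fin m × Fin n × Fin m × Fin n × Fin q × Fin q,
        (Wf t ^ (1/p) * Af t + Wf t ^ (1/p) * Bf t) ^ p) ^ (1/p)) ^ p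
      = ∑ t : Fin m × Fin n × Fin m × Fin n × Fin q × Fin q,
          (Wf t ^ (1/p) * Af t + Wf t ^ (1/p) * Bf t) ^ p := by
    rw [← Real.rpow_mul hXnn, one_div_mul_cancel (ne_of_gt hp0), Real.rpow_one]
  rw [← hcollapse]
  rw [step5a, step5b] at step4
  exact Real.rpow_le_rpow (Real.rpow_nonneg hXnn _) step4 (le_of_lt hp0)

end ObjGlue

theorem real_rpow_add_le {x y e : ℝ} (hx : 0 ≤ x) (hy : 0 ≤ y) (he0 : 0 ≤ e) (he1 : e ≤ 1) :
    (x + y) ^ e ≤ x ^ e + y ^ e := by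
  have h := NNReal.rpow_add_le_add_rpow x.toNNReal y.toNNReal he0 he1
  have hcoe := NNReal.coe_le_coe.mpr h
  simp only [NNReal.coe_rpow, NNReal.coe_add, Real.coe_toNNReal x hx,
    Real.coe_toNNReal y hy] at hcoe
  exact hcoe

end SOSAux

/-- Triangle inequality for the SOS analog of the `L_p` distortion
distance: `Δ_{p,r}(𝕏,ℤ) ≤ Δ_{p,r}(𝕏,𝕐) + Δ_{p,r}(𝕐,ℤ)`. -/
theorem stmt19 (m n q r : ℕ) (hm : 0 < m) (hn : 0 < n) (hq : 0 < q) (hr : 0 < r)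
    (α : Fin m → ℝ) (β : Fin n → ℝ) (γ : Fin q → ℝ)
    (hα : IsProbVec α) (hβ : IsProbVec β) (hγ : IsProbVec γ)
    (hαpos : ∀ i, 0 < α i) (hβpos : ∀ j, 0 < β j) (hγpos : ∀ k, 0 < γ k)
    (dX : Fin m → Fin m → ℝ) (dY : Fin n → Fin n → ℝ) (dZ : Fin q → Fin q → ℝ)
    (hdX : IsFinMetric dX) (hdY : IsFinMetric dY) (hdZ : IsFinMetric dZ)
    (p : ℝ) (hp : 1 ≤ p) :

    deltaPR m q r α γ dX dZ p ≤
      deltaPR m n r α β dX dY p + deltaPR n q r β γ dY dZ p := by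
  classical
  have hr1 : 1 ≤ r := hr
  have hp0 : 0 < p := lt_of_lt_of_le one_pos hp
  have h1p0 : 0 < 1/p := by positivity
  have h1p1 : 1/p ≤ 1 := by
    rw [div_le_one hp0]; exact hp
  simp only [deltaPR, valS]
  set Lxy := distCost m n dX dY p with hLxy
  set Lyz := distCost n q dY dZ p with hLyz
  set Lxz := distCost m q dX dZ p with hLxz
  have hLxyn : ∀ i j k l, 0 ≤ Lxy i j k l :=
    fun i j k l => Real.rpow_nonneg (abs_nonneg _) _
  have hLyzn : ∀ i j k l, 0 ≤ Lyz i j k l :=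
    fun i j k l => Real.rpow_nonneg (abs_nonneg _) _
  have hLxzn : ∀ i j k l, 0 ≤ Lxz i j k l :=
    fun i j k l => Real.rpow_nonneg (abs_nonneg _) _
  set SXY := {v : ℝ | ∃ z, SFeas m n r α β z ∧ v = objS m n Lxy z} with hSXY
  set SYZ := {v : ℝ | ∃ z, SFeas n q r β γ z ∧ v = objS n q Lyz z} with hSYZ
  set SXZ := {v : ℝ | ∃ z, SFeas m q r α γ z ∧ v = objS m q Lxz z} with hSXZ
  have hne₁ : SXY.Nonempty :=
    ⟨objS m n Lxy (SOSAux.zprod α β), SOSAux.zprod α β, SOSAux.SFeas_zprod α β hα hβ, rfl⟩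
  have hne₂ : SYZ.Nonempty :=
    ⟨objS n q Lyz (SOSAux.zprod β γ), SOSAux.zprod β γ, SOSAux.SFeas_zprod β γ hβ hγ, rfl⟩
  have hbdd₃ : BddBelow SXZ := by
    refine ⟨0, fun v hv => ?_⟩
    obtain ⟨z, hz, rfl⟩ := hv
    exact SOSAux.objS_nonneg hr1 α γ z hz Lxz hLxzn
  have hXYnn : 0 ≤ sInf SXY := by
    refine Real.sInf_nonneg fun x hx => ?_
    obtain ⟨z, hz, rfl⟩ := hx
    exact SOSAux.objS_nonneg hr1 α β z hz Lxy hLxyn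
  have hYZnn : 0 ≤ sInf SYZ := by
    refine Real.sInf_nonneg fun x hx => ?_
    obtain ⟨z, hz, rfl⟩ := hx
    exact SOSAux.objS_nonneg hr1 β γ z hz Lyz hLyzn
  have hXZnn : 0 ≤ sInf SXZ := by
    refine Real.sInf_nonneg fun x hx => ?_
    obtain ⟨z, hz, rfl⟩ := hx
    exact SOSAux.objS_nonneg hr1 α γ z hz Lxz hLxzn
  have key : ∀ ε : ℝ, 0 < ε →
      (sInf SXZ) ^ (1/p) ≤ (sInf SXY + ε) ^ (1/p) + (sInf SYZ + ε) ^ (1/p) := by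
    intro ε hε
    obtain ⟨v₁, hv₁mem, hv₁lt⟩ := Real.lt_sInf_add_pos hne₁ hε
    obtain ⟨z₁, hz₁, hv₁eq⟩ := hv₁mem
    obtain ⟨v₂, hv₂mem, hv₂lt⟩ := Real.lt_sInf_add_pos hne₂ hε
    obtain ⟨z₂, hz₂, hv₂eq⟩ := hv₂mem
    have hglue := SOSAux.glue_obj_le hr1 α β γ hβpos dX dY dZ p hp z₁ z₂ hz₁ hz₂
    have hfe : SFeas m q r α γ (SOSAux.zg β z₁ z₂) :=
      SOSAux.SFeas_zg α β γ z₁ z₂ hβpos hz₁ hz₂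
    have hval : sInf SXZ ≤ objS m q Lxz (SOSAux.zg β z₁ z₂) :=
      csInf_le hbdd₃ ⟨_, hfe, rfl⟩
    have hv₁nn : 0 ≤ objS m n Lxy z₁ := SOSAux.objS_nonneg hr1 α β z₁ hz₁ Lxy hLxyn
    have hv₂nn : 0 ≤ objS n q Lyz z₂ := SOSAux.objS_nonneg hr1 β γ z₂ hz₂ Lyz hLyzn
    have hsumnn : 0 ≤ (objS m n Lxy z₁) ^ (1/p) + (objS n q Lyz z₂) ^ (1/p) :=
      add_nonneg (Real.rpow_nonneg hv₁nn _) (Real.rpow_nonneg hv₂nn _)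
    have hchain : sInf SXZ
        ≤ ((objS m n Lxy z₁) ^ (1/p) + (objS n q Lyz z₂) ^ (1/p)) ^ p :=
      le_trans hval hglue
    have h1 : (sInf SXZ) ^ (1/p)
        ≤ (((objS m n Lxy z₁) ^ (1/p) + (objS n q Lyz z₂) ^ (1/p)) ^ p) ^ (1/p) :=
      Real.rpow_le_rpow hXZnn hchain (le_of_lt h1p0)
    rw [← Real.rpow_mul hsumnn, mul_one_div_cancel (ne_of_gt hp0), Real.rpow_one] at h1
    refine le_trans h1 (add_le_add ?_ ?_)
    · refine Real.rpow_le_rpow hv₁nn ?_ (le_of_lt h1p0)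
      rw [← hv₁eq]
      exact le_of_lt hv₁lt
    · refine Real.rpow_le_rpow hv₂nn ?_ (le_of_lt h1p0)
      rw [← hv₂eq]
      exact le_of_lt hv₂lt
  refine le_of_forall_pos_le_add fun δ hδ => ?_
  have hδ2 : (0:ℝ) ≤ δ/2 := by linarith
  have hε : (0:ℝ) < (δ/2) ^ p := Real.rpow_pos_of_pos (by linarith) p
  have hkey := key _ hε
  have hcol : ((δ/2) ^ p) ^ (1/p) = δ/2 := by
    rw [← Real.rpow_mul hδ2, mul_one_div_cancel (ne_of_gt hp0), Real.rpow_one]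
  have hsub1 : (sInf SXY + (δ/2) ^ p) ^ (1/p)
      ≤ (sInf SXY) ^ (1/p) + ((δ/2) ^ p) ^ (1/p) :=
    SOSAux.real_rpow_add_le hXYnn (le_of_lt hε) (le_of_lt h1p0) h1p1
  have hsub2 : (sInf SYZ + (δ/2) ^ p) ^ (1/p)
      ≤ (sInf SYZ) ^ (1/p) + ((δ/2) ^ p) ^ (1/p) :=
    SOSAux.real_rpow_add_le hYZnn (le_of_lt hε) (le_of_lt h1p0) h1p1
  rw [hcol] at hsub1 hsub2
  linarith
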